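/- arXiv:2212.00303 — 4 statements merged into one kernel-verified Lean document; each statement's English description precedes it below -/
import Mathlib

section
/- Let φ : ℝ^m → ℝ∪{+∞} be proper and lower semicontinuous, and let g : X → ℝ^m be parabolically semidifferentiable at x̄ ∈ g^{-1}(dom φ). For any w with dg(x̄)(w) ∈ T_{dom φ}(g(x̄)) define, for p ∈ ℝ^m, S_w(p) := {u ∈ X : g''(x̄;w,u) + p ∈ T²_{dom φ}(g(x̄), dg(x̄)(w))}. If there exist κ > 0 and ε > 0 with dist(x, g^{-1}(dom φ)) ≤ κ·dist(g(x), dom φ) for all x with ‖x−x̄‖ ≤ ε (metric subregularity of x ↦ g(x) − dom φ at (x̄,0) with modulus κ), then S_w(p) ⊆ S_w(0) + κ‖p‖·B_X for all p ∈ ℝ^m, where B_X is the closed unit ball of X. -/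
open Filter Topology Metric Set Pointwise
open scoped RealInnerProductSpace Classical

noncomputable section

namespace Paper

variable {X : Type*} [NormedAddCommGroup X] [NormedSpace ℝ X]
variable {Y : Type*} [NormedAddCommGroup Y] [NormedSpace ℝ Y]

/-- The effective domain of an extended-real-valued function. -/
def edom (h : X → EReal) : Set X := {x | h x ≠ ⊤}

/-- A function with values in `ℝ ∪ {+∞}` is proper if it is nowhere `⊥` and
finite somewhere. -/
def Proper (h : X → EReal) : Prop := (∀ x, h x ≠ ⊥) ∧ ∃ x, h x ≠ ⊤

/-- The indicator function `δ_C` of a set `C`. -/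
def ind (C : Set X) : X → EReal := fun x => if x ∈ C then (0 : EReal) else ⊤

/-- The tangent cone `T_S(x)`. -/
def tcone (S : Set X) (x : X) : Set X :=
  {w | ∃ τ : ℕ → ℝ, (∀ k, 0 < τ k) ∧ Tendsto τ atTop (𝓝 0) ∧
    Tendsto (fun k => infDist (x + τ k • w) S / τ k) atTop (𝓝 0)}

/-- The inner tangent cone `T^i_S(x)`. -/
def itcone (S : Set X) (x : X) : Set X :=
  {w | Tendsto (fun τ : ℝ => infDist (x + τ • w) S / τ) (𝓝[>] (0 : ℝ)) (𝓝 0)}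

/-- The second-order tangent set `T²_S(x,w)`. -/
def tcone2 (S : Set X) (x w : X) : Set X :=
  {z | ∃ τ : ℕ → ℝ, (∀ k, 0 < τ k) ∧ Tendsto τ atTop (𝓝 0) ∧
    Tendsto (fun k => infDist (x + τ k • w + ((τ k) ^ 2 / 2) • z) S / (τ k) ^ 2) atTop (𝓝 0)}

/-- The inner second-order tangent set `T^{i,2}_S(x,w)`. -/
def itcone2 (S : Set X) (x w : X) : Set X :=
  {z | Tendsto (fun τ : ℝ => infDist (x + τ • w + (τ ^ 2 / 2) • z) S / τ ^ 2)
    (𝓝[>] (0 : ℝ)) (𝓝 0)}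

/-- `S` is parabolically derivable at `x` for `w`. -/
def ParabolicallyDerivable (S : Set X) (x w : X) : Prop :=
  itcone2 S x w = tcone2 S x w ∧ (tcone2 S x w).Nonempty

/-- The subderivative `dh(x)(w)`. -/
def subderiv (h : X → EReal) (x w : X) : EReal :=
  liminf (fun p : ℝ × X => (h (x + p.1 • p.2) - h x) * (((p.1)⁻¹ : ℝ) : EReal))
    ((𝓝[>] (0 : ℝ)) ×ˢ 𝓝 w)

/-- The second-order difference quotient `Δ²_τ h(x)(w')` (without a vector `v`),
with the convention that it equals `⊤` whenever `h(x+τw')` and `dh(x)(w')` are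
simultaneously `+∞` or simultaneously `−∞`. -/
def quot2 (h : X → EReal) (x : X) (τ : ℝ) (w' : X) : EReal :=
  if (h (x + τ • w') = ⊤ ∧ subderiv h x w' = ⊤) ∨ (h (x + τ • w') = ⊥ ∧ subderiv h x w' = ⊥)
  then ⊤
  else (h (x + τ • w') - h x - (τ : EReal) * subderiv h x w') * (((2 / τ ^ 2) : ℝ) : EReal)

/-- The second subderivative `d²h(x)(w)` (without a vector `v`). -/
def subderiv2 (h : X → EReal) (x w : X) : EReal :=
  liminf (fun p : ℝ × X => quot2 h x p.1 p.2) ((𝓝[>] (0 : ℝ)) ×ˢ 𝓝 w)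

/-- The parabolic subderivative `d²h(x)(w|z)`. -/
def psubderiv (h : X → EReal) (x w z : X) : EReal :=
  liminf (fun p : ℝ × X =>
      (h (x + p.1 • w + (p.1 ^ 2 / 2) • p.2) - h x - (p.1 : EReal) * subderiv h x w)
        * (((2 / p.1 ^ 2) : ℝ) : EReal))
    ((𝓝[>] (0 : ℝ)) ×ˢ 𝓝 z)

/-- `h` is parabolically epi-differentiable at `x` for `w`. -/
def ParaEpiDiffAt (h : X → EReal) (x w : X) : Prop :=
  (∃ z, psubderiv h x w z ≠ ⊤) ∧
  ∀ z : X, ∀ τ : ℕ → ℝ, (∀ k, 0 < τ k) → Tendsto τ atTop (𝓝 (0 : ℝ)) →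
    ∃ zs : ℕ → X, Tendsto zs atTop (𝓝 z) ∧
      Tendsto (fun k =>
          (h (x + τ k • w + ((τ k) ^ 2 / 2) • zs k) - h x
              - ((τ k : ℝ) : EReal) * subderiv h x w)
            * (((2 / (τ k) ^ 2) : ℝ) : EReal))
        atTop (𝓝 (psubderiv h x w z))

/-- A polyhedral (convex) set: a finite intersection of closed half-spaces. -/
def IsPolyhedral (C : Set X) : Prop :=
  ∃ (k : ℕ) (a : Fin k → (X →L[ℝ] ℝ)) (b : Fin k → ℝ), C = {y | ∀ i, a i y ≤ b i}

/-- `g` is (Fréchet) twice differentiable on `U`. -/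
def TwiceDiffOn (g : X → Y) (U : Set X) : Prop :=
  (∀ y ∈ U, DifferentiableAt ℝ g y) ∧ ∀ y ∈ U, DifferentiableAt ℝ (fderiv ℝ g) y

/-- `ψ` is piecewise twice differentiable (PWTD) with pieces `Ω i` and twice
differentiable selections `sel i`. -/
structure IsPWTD (ψ : X → EReal) {s : ℕ} (Ω : Fin s → Set X) (sel : Fin s → X → ℝ) : Prop where
  dom_nonempty : (edom ψ).Nonempty
  dom_eq : edom ψ = ⋃ i, Ω i
  polyhedral : ∀ i, IsPolyhedral (Ω i)
  smooth : ∀ i, ∃ U : Set X, IsOpen U ∧ Ω i ⊆ U ∧ TwiceDiffOn (sel i) U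
  agrees : ∀ i, ∀ y ∈ Ω i, ψ y = ((sel i y : ℝ) : EReal)

/-- The active index set `J_y`. -/
def Jset {s : ℕ} (Ω : Fin s → Set X) (y : X) : Set (Fin s) := {i | y ∈ Ω i}

/-- The active index set `J_{y,w}`. -/
def Jset2 {s : ℕ} (Ω : Fin s → Set X) (y w : X) : Set (Fin s) :=
  {i | y ∈ Ω i ∧ w ∈ tcone (Ω i) y}

/-- `⟨w, ∇²g(y)w⟩`, the Hessian quadratic form of `g` at `y`. -/
def hess (g : X → ℝ) (y w : X) : ℝ := fderiv ℝ (fderiv ℝ g) y w w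

/-- `ψ` is locally Lipschitz (strictly continuous) relative to its domain. -/
def LipRelDom (ψ : X → EReal) : Prop :=
  ∀ y ∈ edom ψ, ∃ K ε : ℝ, 0 < ε ∧
    ∀ y₁ ∈ edom ψ ∩ ball y ε, ∀ y₂ ∈ edom ψ ∩ ball y ε,
      |(ψ y₁).toReal - (ψ y₂).toReal| ≤ K * ‖y₁ - y₂‖

/-- `g` has semiderivative `d` at `x` for `w`. -/
def HasSemideriv (g : X → Y) (x w : X) (d : Y) : Prop :=
  Tendsto (fun p : ℝ × X => (p.1)⁻¹ • (g (x + p.1 • p.2) - g x))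
    ((𝓝[>] (0 : ℝ)) ×ˢ 𝓝 w) (𝓝 d)

/-- `g` has parabolic semiderivative `d2` at `x` for `w` (with semiderivative `d`)
with respect to `z`. -/
def HasParaSemideriv (g : X → Y) (x w : X) (d : Y) (z : X) (d2 : Y) : Prop :=
  Tendsto (fun p : ℝ × X =>
      (2 / p.1 ^ 2) • (g (x + p.1 • w + (p.1 ^ 2 / 2) • p.2) - g x - p.1 • d))
    ((𝓝[>] (0 : ℝ)) ×ˢ 𝓝 z) (𝓝 d2)

/-- `g` is parabolically semidifferentiable at `x`. -/
def ParaSemidiffAt (g : X → Y) (x : X) : Prop :=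
  ∀ w, ∃ d, HasSemideriv g x w d ∧ ∀ z, ∃ d2, HasParaSemideriv g x w d z d2

/-- The metric subregularity qualification condition for the system `F(x) ∈ D` at `xb`. -/
def MSQC (F : X → Y) (D : Set Y) (xb : X) : Prop :=
  ∃ κ : ℝ, 0 < κ ∧ ∃ ε : ℝ, 0 < ε ∧
    ∀ x : X, ‖x - xb‖ ≤ ε → infDist x (F ⁻¹' D) ≤ κ * infDist (F x) D

/-- A piecewise linear function. -/
def IsPWL (g : X → EReal) : Prop :=
  ∃ (l : ℕ) (D : Fin l → Set X), edom g = ⋃ i, D i ∧ (∀ i, IsPolyhedral (D i)) ∧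
    ∀ i, ∃ (a : X →L[ℝ] ℝ) (c : ℝ), ∀ y ∈ D i, g y = ((a y + c : ℝ) : EReal)

/-- A piecewise linear-quadratic function. -/
def IsPWLQ (g : X → EReal) : Prop :=
  ∃ (l : ℕ) (D : Fin l → Set X), edom g = ⋃ i, D i ∧ (∀ i, IsPolyhedral (D i)) ∧
    ∀ i, ∃ (Q : X →L[ℝ] (X →L[ℝ] ℝ)) (a : X →L[ℝ] ℝ) (c : ℝ),
      ∀ y ∈ D i, g y = ((Q y y + a y + c : ℝ) : EReal)

/-- A function which is, piecewise on finitely many polyhedral sets covering its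
domain, a positively homogeneous continuous function. -/
def IsPiecewisePosHom (g : X → EReal) : Prop :=
  ∃ (l : ℕ) (D : Fin l → Set X), edom g = ⋃ i, D i ∧ (∀ i, IsPolyhedral (D i)) ∧
    ∀ i, ∃ hfun : X → ℝ, Continuous hfun ∧
      (∀ t : ℝ, 0 < t → ∀ x, hfun (t • x) = t * hfun x) ∧
      ∀ y ∈ D i, g y = ((hfun y : ℝ) : EReal)

/-- Convexity for extended-real-valued functions. -/
def ERealConvexOn (g : X → EReal) : Prop :=
  ∀ x y : X, ∀ t : ℝ, 0 ≤ t → t ≤ 1 →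
    g ((1 - t) • x + t • y) ≤ ((1 - t : ℝ) : EReal) * g x + ((t : ℝ) : EReal) * g y

section InnerSpace

variable {E : Type*} [NormedAddCommGroup E] [InnerProductSpace ℝ E]

/-- The second-order difference quotient `Δ²_τ h(x|v)(w')`. -/
def quot2v (h : E → EReal) (x v : E) (τ : ℝ) (w' : E) : EReal :=
  (h (x + τ • w') - h x - ((τ * ⟪v, w'⟫ : ℝ) : EReal)) * (((2 / τ ^ 2) : ℝ) : EReal)

/-- The second subderivative `d²h(x|v)(w)`. -/
def subderiv2v (h : E → EReal) (x v w : E) : EReal :=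
  liminf (fun p : ℝ × E => quot2v h x v p.1 p.2) ((𝓝[>] (0 : ℝ)) ×ˢ 𝓝 w)

/-- The regular (Fréchet) subdifferential `∂̂h(x)`. -/
def rsubdiff (h : E → EReal) (x : E) : Set E :=
  {v | (0 : EReal) ≤ liminf (fun x' =>
      (h x' - h x - ((⟪v, x' - x⟫ : ℝ) : EReal)) * ((‖x' - x‖⁻¹ : ℝ) : EReal)) (𝓝[≠] x)}

/-- The limiting (Mordukhovich) subdifferential `∂h(x)`. -/
def lsubdiff (h : E → EReal) (x : E) : Set E :=
  {v | ∃ xs vs : ℕ → E, Tendsto xs atTop (𝓝 x) ∧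
    Tendsto (fun k => h (xs k)) atTop (𝓝 (h x)) ∧
    (∀ k, vs k ∈ rsubdiff h (xs k)) ∧ Tendsto vs atTop (𝓝 v)}

/-- The critical cone `C_h(x,v)`. -/
def ccone (h : E → EReal) (x v : E) : Set E :=
  {w | subderiv h x w = ((⟪v, w⟫ : ℝ) : EReal)}

/-- `h` is twice epi-differentiable at `x` for `v`. -/
def TwiceEpiDiffAt (h : E → EReal) (x v : E) : Prop :=
  ∀ w : E, ∀ τ : ℕ → ℝ, (∀ k, 0 < τ k) → Tendsto τ atTop (𝓝 (0 : ℝ)) →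
    ∃ ws : ℕ → E, Tendsto ws atTop (𝓝 w) ∧
      Tendsto (fun k => quot2v h x v (τ k) (ws k)) atTop (𝓝 (subderiv2v h x v w))

/-- `h` is properly twice epi-differentiable at `x` for `v`. -/
def ProperTwiceEpiDiffAt (h : E → EReal) (x v : E) : Prop :=
  TwiceEpiDiffAt h x v ∧ (∀ w, subderiv2v h x v w ≠ ⊥) ∧ ∃ w, subderiv2v h x v w ≠ ⊤

/-- `h` is parabolically regular at `x` for `v`. -/
def ParaRegularAt (h : E → EReal) (x v : E) : Prop :=
  ∀ w : E, subderiv h x w = ((⟪v, w⟫ : ℝ) : EReal) →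
    (⨅ z : E, (psubderiv h x w z - ((⟪v, z⟫ : ℝ) : EReal))) = subderiv2v h x v w

/-- The regular normal cone `N̂_S(u)`. -/
def rncone (S : Set E) (u : E) : Set E :=
  {v | limsup (fun u' => ((⟪v, u' - u⟫ / ‖u' - u‖ : ℝ) : EReal)) (𝓝[S \ {u}] u) ≤ 0}

/-- The limiting normal cone `N_S(u)`. -/
def lncone (S : Set E) (u : E) : Set E :=
  {v | ∃ us vs : ℕ → E, (∀ k, us k ∈ S) ∧ Tendsto us atTop (𝓝 u) ∧
    (∀ k, vs k ∈ rncone S (us k)) ∧ Tendsto vs atTop (𝓝 v)}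

/-- `S` is Clarke regular at `u`. -/
def ClarkeRegularAt (S : Set E) (u : E) : Prop := rncone S u = lncone S u

/-- The epigraph of `h`, as a subset of the `ℓ²`-product `E ×₂ ℝ`. -/
def epi (h : E → EReal) : Set (WithLp 2 (E × ℝ)) :=
  {p | h (WithLp.equiv 2 (E × ℝ) p).1 ≤ (((WithLp.equiv 2 (E × ℝ) p).2 : ℝ) : EReal)}

/-- `h` is (Clarke) regular at `y`: its epigraph is Clarke regular at `(y, h(y))`. -/
def FunRegularAt (h : E → EReal) (y : E) : Prop :=
  ClarkeRegularAt (epi h) ((WithLp.equiv 2 (E × ℝ)).symm (y, (h y).toReal))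

/-- The Fenchel conjugate of an extended-real-valued function. -/
def conj (g : E → EReal) (zs : E) : EReal := ⨆ z : E, (((⟪zs, z⟫ : ℝ) : EReal) - g z)

/-- The set `A_h(y,w)` of subgradients attaining the subderivative. -/
def Aset (h : E → EReal) (y w : E) : Set E :=
  {ξ | ξ ∈ lsubdiff h y ∧ ((⟪ξ, w⟫ : ℝ) : EReal) = subderiv h y w}

end InnerSpace

end Paper

namespace Paper

/-- Composing a parabolic semiderivative with sequences. -/
lemma para_seq_aux {X : Type*} [NormedAddCommGroup X] [NormedSpace ℝ X]
    {Y : Type*} [NormedAddCommGroup Y] [NormedSpace ℝ Y]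
    {g : X → Y} {x w : X} {d : Y} {z : X} {d2 : Y}
    (h : HasParaSemideriv g x w d z d2) {τ : ℕ → ℝ} (hpos : ∀ k, 0 < τ k)
    (hτ : Tendsto τ atTop (𝓝 0)) {zs : ℕ → X} (hzs : Tendsto zs atTop (𝓝 z))
    (y : ℕ → X) (hy : ∀ k, y k = x + τ k • w + ((τ k) ^ 2 / 2) • zs k) :
    Tendsto (fun k => (2 / (τ k) ^ 2) •
        (g (y k) - g x - τ k • d)) atTop (𝓝 d2) := by
  have h1 : Tendsto τ atTop (𝓝[>] (0 : ℝ)) :=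
    tendsto_nhdsWithin_of_tendsto_nhds_of_eventually_within _ hτ
      (Filter.Eventually.of_forall hpos)
  have h2 : Tendsto (fun k => (τ k, zs k)) atTop ((𝓝[>] (0 : ℝ)) ×ˢ 𝓝 z) :=
    h1.prodMk hzs
  have h3 := h.comp h2
  refine h3.congr fun k => ?_
  simp only [Function.comp_apply, hy k]

set_option maxHeartbeats 2000000 in
/-- Lemma 2.2 (uniform outer estimate for the multifunction `S_w`). -/
theorem statement1
    {X : Type*} [NormedAddCommGroup X] [InnerProductSpace ℝ X] [FiniteDimensional ℝ X]
    {m : ℕ} (φ : EuclideanSpace ℝ (Fin m) → EReal)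
    (hproper : Proper φ) (hlsc : LowerSemicontinuous φ)
    (g : X → EuclideanSpace ℝ (Fin m)) (xb : X) (hxb : g xb ∈ edom φ)
    (dg : X → EuclideanSpace ℝ (Fin m)) (gpp : X → X → EuclideanSpace ℝ (Fin m))
    (hdg : ∀ w, HasSemideriv g xb w (dg w))
    (hgpp : ∀ w z, HasParaSemideriv g xb w (dg w) z (gpp w z))
    (w : X) (hw : dg w ∈ tcone (edom φ) (g xb))
    (κ ε : ℝ) (hκ : 0 < κ) (hε : 0 < ε)
    (hsub : ∀ x : X, ‖x - xb‖ ≤ ε → infDist x (g ⁻¹' edom φ) ≤ κ * infDist (g x) (edom φ)) :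
    ∀ p : EuclideanSpace ℝ (Fin m),
      {u : X | gpp w u + p ∈ tcone2 (edom φ) (g xb) (dg w)} ⊆
        {u : X | gpp w u ∈ tcone2 (edom φ) (g xb) (dg w)} +
          (κ * ‖p‖) • closedBall (0 : X) 1 := by
  intro p u hu
  obtain ⟨τ0, hpos0, hlim0, hinf0⟩ := hu
  -- find N so that the curve stays within distance ε of xb
  have hxlim : Tendsto (fun k => ‖(xb + τ0 k • w + ((τ0 k) ^ 2 / 2) • u) - xb‖)
      atTop (𝓝 0) := by
    have h1 : Tendsto (fun k => τ0 k • w + ((τ0 k) ^ 2 / 2) • u) atTop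
        (𝓝 ((0 : ℝ) • w + (((0 : ℝ) ^ 2) / 2) • u)) :=
      (hlim0.smul_const w).add (((hlim0.pow 2).div_const 2).smul_const u)
    have h2 := h1.norm
    simp only [zero_smul, add_zero, zero_pow, ne_eq, OfNat.ofNat_ne_zero,
      not_false_eq_true, zero_div, norm_zero] at h2
    have : ∀ k, ‖(xb + τ0 k • w + ((τ0 k) ^ 2 / 2) • u) - xb‖
        = ‖τ0 k • w + ((τ0 k) ^ 2 / 2) • u‖ := by
      intro k; congr 1; abel
    simpa only [this] using h2
  have hevset : {k : ℕ | ‖(xb + τ0 k • w + ((τ0 k) ^ 2 / 2) • u) - xb‖ < ε} ∈ atTop :=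
    hxlim (gt_mem_nhds hε)
  obtain ⟨N, hN⟩ := (eventually_atTop).mp hevset
  set τ : ℕ → ℝ := fun k => τ0 (k + N) with hτdef
  have hpos : ∀ k, 0 < τ k := fun k => hpos0 _
  have hτne : ∀ k, τ k ≠ 0 := fun k => (hpos k).ne'
  have hpos2 : ∀ k, (0 : ℝ) < (τ k) ^ 2 := fun k => pow_pos (hpos k) 2
  have hhalf : ∀ k, (0 : ℝ) < (τ k) ^ 2 / 2 := fun k => div_pos (hpos2 k) two_pos
  have hfac : ∀ k, (0 : ℝ) < 2 / (τ k) ^ 2 := fun k => div_pos two_pos (hpos2 k)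
  have hlim : Tendsto τ atTop (𝓝 0) := hlim0.comp (tendsto_add_atTop_nat N)
  have hinf : Tendsto (fun k => infDist (g xb + τ k • dg w + ((τ k) ^ 2 / 2) • (gpp w u + p))
      (edom φ) / (τ k) ^ 2) atTop (𝓝 0) := hinf0.comp (tendsto_add_atTop_nat N)
  set x_ : ℕ → X := fun k => xb + τ k • w + ((τ k) ^ 2 / 2) • u with hx_def
  have hεk : ∀ k, ‖x_ k - xb‖ ≤ ε := fun k => le_of_lt (hN (k + N) (Nat.le_add_left N k))
  -- the parabolic quotient along the curve
  have hr' := para_seq_aux (hgpp w u) hpos hlim (tendsto_const_nhds (x := u)) x_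
    (fun k => rfl)
  set r : ℕ → EuclideanSpace ℝ (Fin m) :=
    fun k => (2 / (τ k) ^ 2) • (g (x_ k) - g xb - τ k • dg w) with hrdef
  have hr : Tendsto r atTop (𝓝 (gpp w u)) := hr'
  have hsq : ∀ k, ((τ k) ^ 2 / 2) * (2 / (τ k) ^ 2) = 1 := by
    intro k; rw [div_mul_div_comm, mul_comm (2 : ℝ),
      div_self (mul_ne_zero (pow_ne_zero 2 (hτne k)) two_ne_zero)]
  have hsq' : ∀ k, (2 / (τ k) ^ 2) * ((τ k) ^ 2 / 2) = 1 := by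
    intro k; rw [div_mul_div_comm, mul_comm (2 : ℝ),
      div_self (mul_ne_zero (pow_ne_zero 2 (hτne k)) two_ne_zero)]
  have hgx : ∀ k, g (x_ k) = g xb + τ k • dg w + ((τ k) ^ 2 / 2) • r k := by
    intro k
    have h1 : ((τ k) ^ 2 / 2) • r k = g (x_ k) - g xb - τ k • dg w := by
      rw [hrdef]; simp only []
      rw [smul_smul, hsq k, one_smul]
    rw [h1]; abel
  set c : ℕ → EuclideanSpace ℝ (Fin m) :=
    fun k => g xb + τ k • dg w + ((τ k) ^ 2 / 2) • (gpp w u + p) with hcdef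
  set q : ℕ → ℝ := fun k => infDist (c k) (edom φ) / (τ k) ^ 2 with hqdef
  have hq : Tendsto q atTop (𝓝 0) := hinf
  set d : ℕ → ℝ := fun k => ‖r k - (gpp w u + p)‖ with hddef
  have hd : Tendsto d atTop (𝓝 ‖p‖) := by
    have h1 := (hr.sub (tendsto_const_nhds (x := gpp w u + p))).norm
    have h2 : gpp w u - (gpp w u + p) = -p := by abel
    rw [h2, norm_neg] at h1
    exact h1
  -- choose nearly-closest points in the preimage of the domain
  have hSne : (g ⁻¹' edom φ).Nonempty := ⟨xb, hxb⟩
  have hchoice : ∀ k, ∃ y ∈ g ⁻¹' edom φ,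
      dist (x_ k) y < infDist (x_ k) (g ⁻¹' edom φ) + (τ k) ^ 3 := by
    intro k
    refine (infDist_lt_iff hSne).mp ?_
    have : (0 : ℝ) < (τ k) ^ 3 := pow_pos (hpos k) 3
    linarith
  choose xh hxhS hxhd using hchoice
  set u_ : ℕ → X := fun k => (2 / (τ k) ^ 2) • (xh k - xb - τ k • w) with hu_def
  -- key estimate
  have key : ∀ k, ‖u_ k - u‖ ≤ 2 * κ * q k + κ * d k + 2 * τ k := by
    intro k
    have h1 : dist (x_ k) (xh k) ≤ infDist (x_ k) (g ⁻¹' edom φ) + (τ k) ^ 3 :=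
      le_of_lt (hxhd k)
    have h2 : infDist (x_ k) (g ⁻¹' edom φ) ≤ κ * infDist (g (x_ k)) (edom φ) :=
      hsub _ (hεk k)
    have h3 : infDist (g (x_ k)) (edom φ) ≤ infDist (c k) (edom φ) + dist (g (x_ k)) (c k) :=
      infDist_le_infDist_add_dist
    have h4 : dist (g (x_ k)) (c k) = ((τ k) ^ 2 / 2) * d k := by
      rw [dist_eq_norm, hgx k]
      have h5 : (g xb + τ k • dg w + ((τ k) ^ 2 / 2) • r k) - c k
          = ((τ k) ^ 2 / 2) • (r k - (gpp w u + p)) := by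
        simp only [hcdef]; module
      rw [h5, norm_smul, Real.norm_eq_abs, abs_of_pos (hhalf k)]
    have hcq : infDist (c k) (edom φ) = q k * (τ k) ^ 2 := by
      rw [hqdef]
      exact (div_mul_cancel₀ _ (pow_ne_zero 2 (hτne k))).symm
    have hdistb : dist (x_ k) (xh k)
        ≤ κ * (q k * (τ k) ^ 2) + κ * (((τ k) ^ 2 / 2) * d k) + (τ k) ^ 3 := by
      rw [hcq, h4] at h3
      nlinarith [hκ.le]
    have hu2 : u = (2 / (τ k) ^ 2) • (x_ k - xb - τ k • w) := by
      have h6 : x_ k - xb - τ k • w = ((τ k) ^ 2 / 2) • u := by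
        simp only [hx_def]; abel
      rw [h6, smul_smul, hsq' k, one_smul]
    have h7 : u_ k - u = (2 / (τ k) ^ 2) • (xh k - x_ k) := by
      conv_lhs => rw [hu_def, hu2]
      rw [← smul_sub]
      congr 1
      abel
    have h8 : ‖u_ k - u‖ = (2 / (τ k) ^ 2) * dist (x_ k) (xh k) := by
      rw [h7, norm_smul, Real.norm_eq_abs, abs_of_pos (hfac k),
        dist_eq_norm, norm_sub_rev]
    rw [h8]
    calc (2 / (τ k) ^ 2) * dist (x_ k) (xh k)
        ≤ (2 / (τ k) ^ 2) * (κ * (q k * (τ k) ^ 2) + κ * (((τ k) ^ 2 / 2) * d k) + (τ k) ^ 3) :=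
          mul_le_mul_of_nonneg_left hdistb (hfac k).le
      _ = 2 * κ * q k + κ * d k + 2 * τ k := by
          rw [div_mul_eq_mul_div, div_eq_iff (pow_ne_zero 2 (hτne k))]
          ring
  -- the bound converges to κ‖p‖
  have hB : Tendsto (fun k => 2 * κ * q k + κ * d k + 2 * τ k) atTop (𝓝 (κ * ‖p‖)) := by
    have h1 := ((hq.const_mul (2 * κ)).add (hd.const_mul κ)).add (hlim.const_mul 2)
    have h2 : 2 * κ * 0 + κ * ‖p‖ + 2 * 0 = κ * ‖p‖ := by ring
    rwa [h2] at h1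
  -- extract a convergent subsequence
  obtain ⟨M, hM⟩ : ∃ M, ∀ k, 2 * κ * q k + κ * d k + 2 * τ k ≤ M := by
    obtain ⟨M, hM⟩ := hB.bddAbove_range
    exact ⟨M, fun k => hM (Set.mem_range_self k)⟩
  have hball : ∀ k, u_ k ∈ closedBall u M := by
    intro k
    rw [mem_closedBall, dist_eq_norm]
    exact (key k).trans (hM k)
  obtain ⟨u0, _, ψ, hψ, hψlim⟩ := (isCompact_closedBall u M).tendsto_subseq hball
  -- the limit u0 is within κ‖p‖ of u
  have h0 : ‖u - u0‖ ≤ κ * ‖p‖ := by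
    have l1 : Tendsto (fun j => ‖u_ (ψ j) - u‖) atTop (𝓝 ‖u0 - u‖) :=
      (hψlim.sub tendsto_const_nhds).norm
    have l2 : Tendsto (fun j => 2 * κ * q (ψ j) + κ * d (ψ j) + 2 * τ (ψ j)) atTop
        (𝓝 (κ * ‖p‖)) := hB.comp hψ.tendsto_atTop
    have := le_of_tendsto_of_tendsto' l1 l2 (fun j => key (ψ j))
    rwa [norm_sub_rev] at this
  -- u0 belongs to S_w(0)
  have hu0 : gpp w u0 ∈ tcone2 (edom φ) (g xb) (dg w) := by
    refine ⟨fun j => τ (ψ j), fun j => hpos _, hlim.comp hψ.tendsto_atTop, ?_⟩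
    have hxh : ∀ j, xb + τ (ψ j) • w + ((τ (ψ j)) ^ 2 / 2) • (u_ (ψ j)) = xh (ψ j) := by
      intro j
      have : ((τ (ψ j)) ^ 2 / 2) • u_ (ψ j) = xh (ψ j) - xb - τ (ψ j) • w := by
        rw [hu_def]; simp only []
        rw [smul_smul, hsq (ψ j), one_smul]
      rw [this]; abel
    have hs' := para_seq_aux (hgpp w u0) (fun j => hpos (ψ j))
      (hlim.comp hψ.tendsto_atTop) hψlim (fun j => xh (ψ j)) (fun j => (hxh j).symm)
    set s_ : ℕ → EuclideanSpace ℝ (Fin m) := fun j =>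
      (2 / (τ (ψ j)) ^ 2) • (g (xh (ψ j)) - g xb - τ (ψ j) • dg w) with hsdef
    have hs : Tendsto s_ atTop (𝓝 (gpp w u0)) := hs'
    have hgxh : ∀ j, g (xh (ψ j)) = g xb + τ (ψ j) • dg w + ((τ (ψ j)) ^ 2 / 2) • s_ j := by
      intro j
      have h1 : ((τ (ψ j)) ^ 2 / 2) • s_ j = g (xh (ψ j)) - g xb - τ (ψ j) • dg w := by
        rw [hsdef]; simp only []
        rw [smul_smul, hsq (ψ j), one_smul]
      rw [h1]; abel
    have hbound : ∀ j, infDist (g xb + τ (ψ j) • dg w + ((τ (ψ j)) ^ 2 / 2) • gpp w u0)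
        (edom φ) / (τ (ψ j)) ^ 2 ≤ ‖gpp w u0 - s_ j‖ / 2 := by
      intro j
      have hmem : g (xh (ψ j)) ∈ edom φ := hxhS (ψ j)
      have h1 : infDist (g xb + τ (ψ j) • dg w + ((τ (ψ j)) ^ 2 / 2) • gpp w u0) (edom φ)
          ≤ dist (g xb + τ (ψ j) • dg w + ((τ (ψ j)) ^ 2 / 2) • gpp w u0) (g (xh (ψ j))) :=
        infDist_le_dist_of_mem hmem
      have h2 : dist (g xb + τ (ψ j) • dg w + ((τ (ψ j)) ^ 2 / 2) • gpp w u0) (g (xh (ψ j)))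
          = ((τ (ψ j)) ^ 2 / 2) * ‖gpp w u0 - s_ j‖ := by
        rw [dist_eq_norm, hgxh j]
        have h3 : (g xb + τ (ψ j) • dg w + ((τ (ψ j)) ^ 2 / 2) • gpp w u0)
            - (g xb + τ (ψ j) • dg w + ((τ (ψ j)) ^ 2 / 2) • s_ j)
            = ((τ (ψ j)) ^ 2 / 2) • (gpp w u0 - s_ j) := by
          rw [smul_sub]; abel
        rw [h3, norm_smul, Real.norm_eq_abs, abs_of_pos (hhalf (ψ j))]
      rw [div_le_iff₀ (hpos2 (ψ j))]
      calc infDist (g xb + τ (ψ j) • dg w + ((τ (ψ j)) ^ 2 / 2) • gpp w u0) (edom φ)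
          ≤ ((τ (ψ j)) ^ 2 / 2) * ‖gpp w u0 - s_ j‖ := h1.trans_eq h2
        _ = ‖gpp w u0 - s_ j‖ / 2 * (τ (ψ j)) ^ 2 := by ring
    have hzero : Tendsto (fun j => ‖gpp w u0 - s_ j‖ / 2) atTop (𝓝 0) := by
      have h1 := ((tendsto_const_nhds (x := gpp w u0)).sub hs).norm.div_const 2
      simpa using h1
    exact squeeze_zero
      (fun j => div_nonneg infDist_nonneg (hpos2 (ψ j)).le) hbound hzero
  -- conclude
  rw [Set.mem_add]
  refine ⟨u0, hu0, u - u0, ?_, by abel⟩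
  rcases eq_or_lt_of_le (by positivity : (0 : ℝ) ≤ κ * ‖p‖) with hz | hpos'
  · have : u - u0 = 0 := by
      rw [← norm_le_zero_iff]
      rw [← hz] at h0
      exact h0
    refine Set.mem_smul_set.mpr ⟨0, ?_, ?_⟩
    · simp
    · rw [smul_zero, this]
  · refine Set.mem_smul_set.mpr ⟨(κ * ‖p‖)⁻¹ • (u - u0), ?_, ?_⟩
    · rw [mem_closedBall_zero_iff, norm_smul, Real.norm_eq_abs,
        abs_of_pos (inv_pos.mpr hpos')]
      rw [inv_mul_le_iff₀ hpos', mul_one]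
      exact h0
    · rw [smul_inv_smul₀ hpos'.ne']

end Paper
end
end

section
/- Let h = φ∘g where φ : ℝ^m → ℝ∪{+∞} is proper lower semicontinuous and g : X → ℝ^m is parabolically semidifferentiable at x̄ ∈ dom h. Suppose there exist κ > 0 and ε > 0 with dist(x, g^{-1}(dom φ)) ≤ κ·dist(g(x), dom φ) for all x with ‖x−x̄‖ ≤ ε. Then for any w ∈ T_{dom h}(x̄) and any z ∈ X: z ∈ T²_{dom h}(x̄,w) if and only if g''(x̄;w,z) ∈ T²_{dom φ}(g(x̄), dg(x̄)(w)). If in addition dom φ is parabolically derivable at g(x̄) for dg(x̄)(w), then dom h is parabolically derivable at x̄ for w. -/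
open Filter Topology Metric Set Pointwise
open scoped RealInnerProductSpace Classical

noncomputable section

namespace Paper

section Aux

variable {X : Type*} [NormedAddCommGroup X] [NormedSpace ℝ X]
variable {Y : Type*} [NormedAddCommGroup Y] [NormedSpace ℝ Y]

lemma tendsto_prod_aux {ι : Type*} {l : Filter ι} {τ : ι → ℝ}
    (hpos : ∀ᶠ i in l, 0 < τ i) (hτ : Tendsto τ l (𝓝 0))
    {zs : ι → X} {z : X} (hz : Tendsto zs l (𝓝 z)) :
    Tendsto (fun i => (τ i, zs i)) l ((𝓝[>] (0:ℝ)) ×ˢ 𝓝 z) :=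
  (tendsto_nhdsWithin_of_tendsto_nhds_of_eventually_within τ hτ hpos).prodMk hz

lemma para_key {g : X → Y} {xb w : X} {d : Y} {z : X} {d2 : Y}
    (hg : HasParaSemideriv g xb w d z d2)
    {ι : Type*} {l : Filter ι} {τ : ι → ℝ}
    (hpos : ∀ᶠ i in l, 0 < τ i) (hτ : Tendsto τ l (𝓝 0))
    {zs : ι → X} (hz : Tendsto zs l (𝓝 z)) :
    Tendsto (fun i => (2 / τ i ^ 2) • (g (xb + τ i • w + (τ i ^ 2 / 2) • zs i)
      - g xb - τ i • d)) l (𝓝 d2) := by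
  have h := Filter.Tendsto.comp (g := fun p : ℝ × X =>
      (2 / p.1 ^ 2) • (g (xb + p.1 • w + (p.1 ^ 2 / 2) • p.2) - g xb - p.1 • d))
    hg (tendsto_prod_aux hpos hτ hz)
  exact h

lemma decomp {τ : ℝ} (hτ : τ ≠ 0) (g : X → Y) (xb w : X) (d : Y) (zz : X) :
    g (xb + τ • w + (τ ^ 2 / 2) • zz)
      = g xb + τ • d + (τ ^ 2 / 2) •
          ((2 / τ ^ 2) • (g (xb + τ • w + (τ ^ 2 / 2) • zz) - g xb - τ • d)) := by
  rw [smul_smul]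
  have h1 : τ ^ 2 / 2 * (2 / τ ^ 2) = 1 := by field_simp
  rw [h1, one_smul]
  abel

lemma dist_decomp {τ : ℝ} (hτ : 0 < τ) (g : X → Y) (xb w : X) (d : Y) (zz : X) (d2 : Y) :
    dist (g xb + τ • d + (τ ^ 2 / 2) • d2) (g (xb + τ • w + (τ ^ 2 / 2) • zz))
      = (τ ^ 2 / 2) *
        ‖d2 - (2 / τ ^ 2) • (g (xb + τ • w + (τ ^ 2 / 2) • zz) - g xb - τ • d)‖ := by
  set r := (2 / τ ^ 2) • (g (xb + τ • w + (τ ^ 2 / 2) • zz) - g xb - τ • d) with hr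
  have hg2 : g (xb + τ • w + (τ ^ 2 / 2) • zz) = g xb + τ • d + (τ ^ 2 / 2) • r :=
    decomp hτ.ne' g xb w d zz
  rw [hg2, dist_eq_norm]
  have h3 : (g xb + τ • d + (τ ^ 2 / 2) • d2) - (g xb + τ • d + (τ ^ 2 / 2) • r)
      = (τ ^ 2 / 2) • (d2 - r) := by
    rw [smul_sub]; abel
  rw [h3, norm_smul, Real.norm_eq_abs, abs_of_pos (by positivity)]

set_option maxHeartbeats 1000000 in
lemma forward_mem {g : X → Y} {xb w : X} {d : Y} {z : X} {d2 : Y}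
    (hg : HasParaSemideriv g xb w d z d2)
    {C : Set Y} (hS : (g ⁻¹' C).Nonempty)
    (hz2 : z ∈ tcone2 (g ⁻¹' C) xb w) :
    d2 ∈ tcone2 C (g xb) d := by
  obtain ⟨τ, hpos, hτ0, hlim⟩ := hz2
  have hsel : ∀ k : ℕ, ∃ x, x ∈ g ⁻¹' C ∧
      dist (xb + τ k • w + (τ k ^ 2 / 2) • z) x
        < infDist (xb + τ k • w + (τ k ^ 2 / 2) • z) (g ⁻¹' C) + τ k ^ 3 := by
    intro k
    obtain ⟨x, hx1, hx2⟩ := (infDist_lt_iff hS).1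
      (lt_add_of_pos_right _ (pow_pos (hpos k) 3))
    exact ⟨x, hx1, hx2⟩
  choose xs hxsC hxsd using hsel
  have hDnn : ∀ k, (0:ℝ) ≤ dist (xb + τ k • w + (τ k ^ 2 / 2) • z) (xs k) / τ k ^ 2 :=
    fun k => div_nonneg dist_nonneg (sq_nonneg _)
  have hD : Tendsto (fun k => dist (xb + τ k • w + (τ k ^ 2 / 2) • z) (xs k) / τ k ^ 2)
      atTop (𝓝 0) := by
    apply squeeze_zero' (Eventually.of_forall hDnn)
      (g := fun k => infDist (xb + τ k • w + (τ k ^ 2 / 2) • z) (g ⁻¹' C) / τ k ^ 2 + τ k)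
    · refine Eventually.of_forall fun k => ?_
      have hτ2 : (0:ℝ) < τ k ^ 2 := pow_pos (hpos k) 2
      have h1 := (hxsd k).le
      have h2 : τ k ^ 3 / τ k ^ 2 = τ k := by
        have hne := (hpos k).ne'
        field_simp [pow_succ]
      calc dist (xb + τ k • w + (τ k ^ 2 / 2) • z) (xs k) / τ k ^ 2
          ≤ (infDist (xb + τ k • w + (τ k ^ 2 / 2) • z) (g ⁻¹' C) + τ k ^ 3) / τ k ^ 2 := by
            exact div_le_div_of_nonneg_right h1 hτ2.le |>.trans_eq rfl
        _ = infDist (xb + τ k • w + (τ k ^ 2 / 2) • z) (g ⁻¹' C) / τ k ^ 2 + τ k := by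
            rw [add_div, h2]
    · simpa using hlim.add hτ0
  set zs : ℕ → X := fun k => z + (2 / τ k ^ 2) • (xs k - (xb + τ k • w + (τ k ^ 2 / 2) • z))
    with hzs
  have hzz : Tendsto zs atTop (𝓝 z) := by
    rw [tendsto_iff_norm_sub_tendsto_zero]
    have heq2 : ∀ k, ‖zs k - z‖
        = 2 * (dist (xb + τ k • w + (τ k ^ 2 / 2) • z) (xs k) / τ k ^ 2) := by
      intro k
      have hτ2 : (0:ℝ) < τ k ^ 2 := pow_pos (hpos k) 2
      simp only [hzs, add_sub_cancel_left, norm_smul, Real.norm_eq_abs]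
      rw [abs_of_pos (by positivity), dist_eq_norm, norm_sub_rev]
      ring
    have := hD.const_mul 2
    simpa only [mul_zero] using this.congr fun k => (heq2 k).symm
  have hxseq : ∀ k, xs k = xb + τ k • w + (τ k ^ 2 / 2) • zs k := by
    intro k
    have hτ2 : (τ k : ℝ) ≠ 0 := (hpos k).ne'
    have h1 : (τ k ^ 2 / 2) • zs k
        = (τ k ^ 2 / 2) • z + (xs k - (xb + τ k • w + (τ k ^ 2 / 2) • z)) := by
      rw [hzs]
      rw [smul_add, smul_smul]
      have h2 : τ k ^ 2 / 2 * (2 / τ k ^ 2) = 1 := by field_simp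
      rw [h2, one_smul]
    rw [h1]; abel
  have hr : Tendsto (fun k => (2 / τ k ^ 2) • (g (xs k) - g xb - τ k • d)) atTop (𝓝 d2) := by
    have := para_key hg (Eventually.of_forall hpos) hτ0 hzz
    exact this.congr fun k => by rw [← hxseq k]
  refine ⟨τ, hpos, hτ0, ?_⟩
  apply squeeze_zero'
    (Eventually.of_forall fun k => div_nonneg infDist_nonneg (sq_nonneg _))
    (g := fun k => ‖d2 - (2 / τ k ^ 2) • (g (xs k) - g xb - τ k • d)‖ / 2)
  · refine Eventually.of_forall fun k => ?_
    have hτ2 : (0:ℝ) < τ k ^ 2 := pow_pos (hpos k) 2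
    have hmem : g (xs k) ∈ C := hxsC k
    have hle : infDist (g xb + τ k • d + (τ k ^ 2 / 2) • d2) C
        ≤ dist (g xb + τ k • d + (τ k ^ 2 / 2) • d2) (g (xs k)) :=
      infDist_le_dist_of_mem hmem
    have hdd : dist (g xb + τ k • d + (τ k ^ 2 / 2) • d2) (g (xs k))
        = (τ k ^ 2 / 2) * ‖d2 - (2 / τ k ^ 2) • (g (xs k) - g xb - τ k • d)‖ := by
      conv_lhs => rw [hxseq k]
      rw [dist_decomp (hpos k) g xb w d (zs k) d2, ← hxseq k]
    calc infDist (g xb + τ k • d + (τ k ^ 2 / 2) • d2) C / τ k ^ 2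
        ≤ ((τ k ^ 2 / 2) * ‖d2 - (2 / τ k ^ 2) • (g (xs k) - g xb - τ k • d)‖) / τ k ^ 2 :=
          div_le_div_of_nonneg_right (hle.trans_eq hdd) hτ2.le
      _ = ‖d2 - (2 / τ k ^ 2) • (g (xs k) - g xb - τ k • d)‖ / 2 := by
          rw [div_eq_iff hτ2.ne']; ring
  · have := (hr.const_sub d2).norm.div_const 2
    simpa using this

set_option maxHeartbeats 1000000 in
lemma reverse_tendsto {g : X → Y} {xb w : X} {d : Y} {z : X} {d2 : Y}
    (hg : HasParaSemideriv g xb w d z d2)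
    {C : Set Y} {κ ε : ℝ} (hκ : 0 < κ) (hε : 0 < ε)
    (hsub : ∀ x : X, ‖x - xb‖ ≤ ε → infDist x (g ⁻¹' C) ≤ κ * infDist (g x) C)
    {ι : Type*} {l : Filter ι} {τ : ι → ℝ}
    (hpos : ∀ᶠ i in l, 0 < τ i) (hτ : Tendsto τ l (𝓝 0))
    (h : Tendsto (fun i => infDist (g xb + τ i • d + (τ i ^ 2 / 2) • d2) C / τ i ^ 2)
      l (𝓝 0)) :
    Tendsto (fun i => infDist (xb + τ i • w + (τ i ^ 2 / 2) • z) (g ⁻¹' C) / τ i ^ 2)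
      l (𝓝 0) := by
  have hr := para_key hg hpos hτ (tendsto_const_nhds (x := z) (f := l))
  have hx : Tendsto (fun i => xb + τ i • w + (τ i ^ 2 / 2) • z) l (𝓝 xb) := by
    have h1 : Tendsto (fun i => xb + τ i • w + (τ i ^ 2 / 2) • z) l
        (𝓝 (xb + (0:ℝ) • w + ((0:ℝ) ^ 2 / 2) • z)) := by
      exact ((tendsto_const_nhds.add (hτ.smul_const w)).add
        (((hτ.pow 2).div_const 2).smul_const z))
    simpa using h1
  have hnorm : Tendsto (fun i => ‖(xb + τ i • w + (τ i ^ 2 / 2) • z) - xb‖) l (𝓝 0) := by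
    have := (hx.sub_const xb).norm
    simpa using this
  have hev : ∀ᶠ i in l, ‖(xb + τ i • w + (τ i ^ 2 / 2) • z) - xb‖ ≤ ε :=
    (hnorm.eventually_lt_const hε).mono fun i hi => hi.le
  apply squeeze_zero'
    (Eventually.of_forall fun i => div_nonneg infDist_nonneg (sq_nonneg _))
    (g := fun i => κ * (infDist (g xb + τ i • d + (τ i ^ 2 / 2) • d2) C / τ i ^ 2
      + ‖d2 - (2 / τ i ^ 2) • (g (xb + τ i • w + (τ i ^ 2 / 2) • z) - g xb - τ i • d)‖ / 2))
  · filter_upwards [hpos, hev] with i hpi hei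
    have hτ2 : (0:ℝ) < τ i ^ 2 := pow_pos hpi 2
    have h1 : infDist (xb + τ i • w + (τ i ^ 2 / 2) • z) (g ⁻¹' C)
        ≤ κ * infDist (g (xb + τ i • w + (τ i ^ 2 / 2) • z)) C := hsub _ hei
    have h2 : infDist (g (xb + τ i • w + (τ i ^ 2 / 2) • z)) C
        ≤ infDist (g xb + τ i • d + (τ i ^ 2 / 2) • d2) C
          + (τ i ^ 2 / 2) *
            ‖d2 - (2 / τ i ^ 2) • (g (xb + τ i • w + (τ i ^ 2 / 2) • z) - g xb - τ i • d)‖ := by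
      have := infDist_le_infDist_add_dist
        (x := g (xb + τ i • w + (τ i ^ 2 / 2) • z))
        (y := g xb + τ i • d + (τ i ^ 2 / 2) • d2) (s := C)
      rw [dist_comm, dist_decomp hpi g xb w d z d2] at this
      exact this
    have h3 : infDist (xb + τ i • w + (τ i ^ 2 / 2) • z) (g ⁻¹' C) / τ i ^ 2
        ≤ κ * (infDist (g xb + τ i • d + (τ i ^ 2 / 2) • d2) C
          + (τ i ^ 2 / 2) *
            ‖d2 - (2 / τ i ^ 2) • (g (xb + τ i • w + (τ i ^ 2 / 2) • z) - g xb - τ i • d)‖)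
          / τ i ^ 2 :=
      div_le_div_of_nonneg_right (h1.trans (by nlinarith [h2])) hτ2.le
    refine h3.trans_eq ?_
    field_simp
  · have hlim2 := (h.add ((hr.const_sub d2).norm.div_const 2)).const_mul κ
    simpa using hlim2

lemma itcone2_subset_tcone2 (S : Set X) (x w : X) : itcone2 S x w ⊆ tcone2 S x w := by
  intro z hz
  have h1 : Tendsto (fun k : ℕ => ((k : ℝ) + 1)⁻¹) atTop (𝓝 0) :=
    (tendsto_atTop_add_const_right atTop (1:ℝ) tendsto_natCast_atTop_atTop).inv_tendsto_atTop
  have hpos : ∀ k : ℕ, (0:ℝ) < ((k : ℝ) + 1)⁻¹ := fun k => by positivity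
  have h2 : Tendsto (fun k : ℕ => ((k : ℝ) + 1)⁻¹) atTop (𝓝[>] 0) :=
    tendsto_nhdsWithin_of_tendsto_nhds_of_eventually_within _ h1
      (Eventually.of_forall hpos)
  exact ⟨fun k => ((k : ℝ) + 1)⁻¹, hpos, h1, hz.comp h2⟩

set_option maxHeartbeats 1000000 in
lemma tcone2_nonempty [ProperSpace X] {g : X → Y} {xb w : X} {d : Y} {d20 : Y}
    (hg : HasParaSemideriv g xb w d 0 d20)
    {C : Set Y} {κ ε : ℝ} (hκ : 0 < κ) (hε : 0 < ε)
    (hsub : ∀ x : X, ‖x - xb‖ ≤ ε → infDist x (g ⁻¹' C) ≤ κ * infDist (g x) C)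
    (hS : (g ⁻¹' C).Nonempty)
    {u : Y} (hu : u ∈ itcone2 C (g xb) d) :
    (tcone2 (g ⁻¹' C) xb w).Nonempty := by
  set τ : ℕ → ℝ := fun k => ((k : ℝ) + 1)⁻¹ with hτdef
  have hpos : ∀ k : ℕ, (0:ℝ) < τ k := fun k => by positivity
  have hτ0 : Tendsto τ atTop (𝓝 0) :=
    (tendsto_atTop_add_const_right atTop (1:ℝ) tendsto_natCast_atTop_atTop).inv_tendsto_atTop
  have hτ0' : Tendsto τ atTop (𝓝[>] 0) :=
    tendsto_nhdsWithin_of_tendsto_nhds_of_eventually_within _ hτ0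
      (Eventually.of_forall hpos)
  have hq : Tendsto (fun k => infDist (g xb + τ k • d + (τ k ^ 2 / 2) • u) C / τ k ^ 2)
      atTop (𝓝 0) := hu.comp hτ0'
  have hr : Tendsto (fun k => (2 / τ k ^ 2) •
      (g (xb + τ k • w + (τ k ^ 2 / 2) • (0:X)) - g xb - τ k • d)) atTop (𝓝 d20) :=
    para_key hg (Eventually.of_forall hpos) hτ0 tendsto_const_nhds
  set M : ℝ := ‖u - d20‖ / 2 with hM
  -- bound on infDist (g (x k)) C / τ k ^ 2
  have hbd : ∀ᶠ k in atTop,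
      infDist (g (xb + τ k • w + (τ k ^ 2 / 2) • (0:X))) C / τ k ^ 2 ≤ M + 1 := by
    have hrhs : Tendsto (fun k => infDist (g xb + τ k • d + (τ k ^ 2 / 2) • u) C / τ k ^ 2
        + ‖u - (2 / τ k ^ 2) •
            (g (xb + τ k • w + (τ k ^ 2 / 2) • (0:X)) - g xb - τ k • d)‖ / 2)
        atTop (𝓝 (0 + ‖u - d20‖ / 2)) :=
      hq.add ((hr.const_sub u).norm.div_const 2)
    have hev := hrhs.eventually_lt_const (show (0:ℝ) + ‖u - d20‖ / 2 < M + 1 by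
      rw [hM]; linarith)
    filter_upwards [hev] with k hk
    have hτ2 : (0:ℝ) < τ k ^ 2 := pow_pos (hpos k) 2
    have h2 : infDist (g (xb + τ k • w + (τ k ^ 2 / 2) • (0:X))) C
        ≤ infDist (g xb + τ k • d + (τ k ^ 2 / 2) • u) C
          + (τ k ^ 2 / 2) * ‖u - (2 / τ k ^ 2) •
              (g (xb + τ k • w + (τ k ^ 2 / 2) • (0:X)) - g xb - τ k • d)‖ := by
      have := infDist_le_infDist_add_dist
        (x := g (xb + τ k • w + (τ k ^ 2 / 2) • (0:X)))
        (y := g xb + τ k • d + (τ k ^ 2 / 2) • u) (s := C)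
      rw [dist_comm, dist_decomp (hpos k) g xb w d (0:X) u] at this
      exact this
    have h3 : infDist (g (xb + τ k • w + (τ k ^ 2 / 2) • (0:X))) C / τ k ^ 2
        ≤ infDist (g xb + τ k • d + (τ k ^ 2 / 2) • u) C / τ k ^ 2
          + ‖u - (2 / τ k ^ 2) •
              (g (xb + τ k • w + (τ k ^ 2 / 2) • (0:X)) - g xb - τ k • d)‖ / 2 := by
      refine (div_le_div_of_nonneg_right h2 hτ2.le).trans_eq ?_
      rw [add_div]; congr 1; rw [div_eq_iff hτ2.ne']; ring
    exact h3.trans hk.le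
  have hx : Tendsto (fun k => xb + τ k • w + (τ k ^ 2 / 2) • (0:X)) atTop (𝓝 xb) := by
    have h1 : Tendsto (fun k => xb + τ k • w + (τ k ^ 2 / 2) • (0:X)) atTop
        (𝓝 (xb + (0:ℝ) • w + ((0:ℝ) ^ 2 / 2) • (0:X))) :=
      (tendsto_const_nhds.add (hτ0.smul_const w)).add
        (((hτ0.pow 2).div_const 2).smul_const (0:X))
    simpa using h1
  have hev : ∀ᶠ k in atTop, ‖(xb + τ k • w + (τ k ^ 2 / 2) • (0:X)) - xb‖ ≤ ε := by
    have hnorm : Tendsto (fun k => ‖(xb + τ k • w + (τ k ^ 2 / 2) • (0:X)) - xb‖)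
        atTop (𝓝 0) := by
      have := (hx.sub_const xb).norm; simpa using this
    exact (hnorm.eventually_lt_const hε).mono fun k hk => hk.le
  have hSd : ∀ᶠ k in atTop,
      infDist (xb + τ k • w + (τ k ^ 2 / 2) • (0:X)) (g ⁻¹' C) ≤ κ * (M + 1) * τ k ^ 2 := by
    filter_upwards [hbd, hev] with k hk1 hk2
    have hτ2 : (0:ℝ) < τ k ^ 2 := pow_pos (hpos k) 2
    have h1 := hsub _ hk2
    have h2 : infDist (g (xb + τ k • w + (τ k ^ 2 / 2) • (0:X))) C ≤ (M + 1) * τ k ^ 2 :=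
      (div_le_iff₀ hτ2).1 hk1
    calc infDist (xb + τ k • w + (τ k ^ 2 / 2) • (0:X)) (g ⁻¹' C)
        ≤ κ * infDist (g (xb + τ k • w + (τ k ^ 2 / 2) • (0:X))) C := h1
      _ ≤ κ * ((M + 1) * τ k ^ 2) := by
          exact mul_le_mul_of_nonneg_left h2 hκ.le
      _ = κ * (M + 1) * τ k ^ 2 := by ring
  -- choose nearby points in g ⁻¹' C
  have hsel : ∀ k : ℕ, ∃ x, x ∈ g ⁻¹' C ∧
      dist (xb + τ k • w + (τ k ^ 2 / 2) • (0:X)) x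
        < infDist (xb + τ k • w + (τ k ^ 2 / 2) • (0:X)) (g ⁻¹' C) + τ k ^ 2 := by
    intro k
    obtain ⟨x, hx1, hx2⟩ := (infDist_lt_iff hS).1
      (lt_add_of_pos_right _ (pow_pos (hpos k) 2))
    exact ⟨x, hx1, hx2⟩
  choose xs hxsC hxsd using hsel
  set zs : ℕ → X := fun k =>
    (2 / τ k ^ 2) • (xs k - (xb + τ k • w + (τ k ^ 2 / 2) • (0:X))) with hzs
  have hxseq : ∀ k, xs k = xb + τ k • w + (τ k ^ 2 / 2) • zs k := by
    intro k
    have h2 : τ k ^ 2 / 2 * (2 / τ k ^ 2) = 1 := by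
      have := (hpos k).ne'; field_simp
    have h1 : (τ k ^ 2 / 2) • zs k
        = xs k - (xb + τ k • w + (τ k ^ 2 / 2) • (0:X)) := by
      rw [hzs, smul_smul, h2, one_smul]
    rw [h1, smul_zero]
    abel
  set R : ℝ := 2 * (κ * (M + 1) + 1) with hR
  have hzbd : ∀ᶠ k in atTop, ‖zs k‖ ≤ R := by
    filter_upwards [hSd] with k hk
    have hτ2 : (0:ℝ) < τ k ^ 2 := pow_pos (hpos k) 2
    have h1 : dist (xb + τ k • w + (τ k ^ 2 / 2) • (0:X)) (xs k)
        ≤ (κ * (M + 1) + 1) * τ k ^ 2 := by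
      have := (hxsd k).le
      nlinarith [hk]
    have h2 : ‖zs k‖ = (2 / τ k ^ 2) * dist (xb + τ k • w + (τ k ^ 2 / 2) • (0:X)) (xs k) := by
      rw [hzs]
      rw [norm_smul, Real.norm_eq_abs, abs_of_pos (by positivity), dist_eq_norm,
        norm_sub_rev]
    rw [h2, hR]
    calc (2 / τ k ^ 2) * dist (xb + τ k • w + (τ k ^ 2 / 2) • (0:X)) (xs k)
        ≤ (2 / τ k ^ 2) * ((κ * (M + 1) + 1) * τ k ^ 2) := by
          exact mul_le_mul_of_nonneg_left h1 (by positivity)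
      _ = 2 * (κ * (M + 1) + 1) := by rw [div_mul_eq_mul_div, div_eq_iff hτ2.ne']; ring
  obtain ⟨N, hN⟩ := eventually_atTop.1 hzbd
  have hmem : ∀ j : ℕ, zs (j + N) ∈ closedBall (0:X) R := by
    intro j
    rw [mem_closedBall_zero_iff]
    exact hN (j + N) (Nat.le_add_left N j)
  obtain ⟨a, -, ψ, hψmono, hψtend⟩ :=
    tendsto_subseq_of_bounded isBounded_closedBall hmem
  refine ⟨a, fun j => τ (ψ j + N), fun j => hpos _, ?_, ?_⟩
  · exact hτ0.comp ((tendsto_add_atTop_nat N).comp hψmono.tendsto_atTop)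
  · apply squeeze_zero'
      (Eventually.of_forall fun j => div_nonneg infDist_nonneg (sq_nonneg _))
      (g := fun j => ‖a - zs (ψ j + N)‖ / 2)
    · refine Eventually.of_forall fun j => ?_
      set k := ψ j + N with hk
      have hτ2 : (0:ℝ) < τ k ^ 2 := pow_pos (hpos k) 2
      have hle : infDist (xb + τ k • w + (τ k ^ 2 / 2) • a) (g ⁻¹' C)
          ≤ dist (xb + τ k • w + (τ k ^ 2 / 2) • a) (xs k) :=
        infDist_le_dist_of_mem (hxsC k)
      have hdd : dist (xb + τ k • w + (τ k ^ 2 / 2) • a) (xs k)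
          = (τ k ^ 2 / 2) * ‖a - zs k‖ := by
        rw [hxseq k, dist_eq_norm]
        have : (xb + τ k • w + (τ k ^ 2 / 2) • a) - (xb + τ k • w + (τ k ^ 2 / 2) • zs k)
            = (τ k ^ 2 / 2) • (a - zs k) := by
          rw [smul_sub]; abel
        rw [this, norm_smul, Real.norm_eq_abs, abs_of_pos (by positivity)]
      calc infDist (xb + τ k • w + (τ k ^ 2 / 2) • a) (g ⁻¹' C) / τ k ^ 2
          ≤ ((τ k ^ 2 / 2) * ‖a - zs k‖) / τ k ^ 2 :=
            div_le_div_of_nonneg_right (hle.trans_eq hdd) hτ2.le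
        _ = ‖a - zs k‖ / 2 := by rw [div_eq_iff hτ2.ne']; ring
    · have h1 : Tendsto (fun j => ‖a - zs (ψ j + N)‖ / 2) atTop (𝓝 (‖a - a‖ / 2)) := by
        have h2 : Tendsto (fun j => zs (ψ j + N)) atTop (𝓝 a) := hψtend
        exact ((h2.const_sub a).norm.div_const 2)
      simpa using h1

end Aux

set_option maxHeartbeats 1000000 in
/-- Proposition 2.1 (second-order tangent sets to the domain of `h = φ ∘ g`). -/
theorem statement2
    {X : Type*} [NormedAddCommGroup X] [InnerProductSpace ℝ X] [FiniteDimensional ℝ X]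
    {m : ℕ} (φ : EuclideanSpace ℝ (Fin m) → EReal)
    (hproper : Proper φ) (hlsc : LowerSemicontinuous φ)
    (g : X → EuclideanSpace ℝ (Fin m)) (xb : X) (hxb : φ (g xb) ≠ ⊤)
    (dg : X → EuclideanSpace ℝ (Fin m)) (gpp : X → X → EuclideanSpace ℝ (Fin m))
    (hdg : ∀ w, HasSemideriv g xb w (dg w))
    (hgpp : ∀ w z, HasParaSemideriv g xb w (dg w) z (gpp w z))
    (κ ε : ℝ) (hκ : 0 < κ) (hε : 0 < ε)
    (hsub : ∀ x : X, ‖x - xb‖ ≤ ε → infDist x (g ⁻¹' edom φ) ≤ κ * infDist (g x) (edom φ)) :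
    ∀ w ∈ tcone (edom fun x => φ (g x)) xb,
      (∀ z : X, z ∈ tcone2 (edom fun x => φ (g x)) xb w ↔
        gpp w z ∈ tcone2 (edom φ) (g xb) (dg w)) ∧
      (ParabolicallyDerivable (edom φ) (g xb) (dg w) →
        ParabolicallyDerivable (edom fun x => φ (g x)) xb w) := by
  have hSne : (g ⁻¹' edom φ).Nonempty := ⟨xb, hxb⟩
  intro w _hw
  constructor
  · intro z
    constructor
    · intro hz
      exact forward_mem (hgpp w z) hSne hz
    · intro hz
      obtain ⟨τ, hpos, hτ0, hlim⟩ := hz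
      exact ⟨τ, hpos, hτ0,
        reverse_tendsto (hgpp w z) hκ hε hsub (Eventually.of_forall hpos) hτ0 hlim⟩
  · rintro ⟨heq, u, hu⟩
    constructor
    · apply subset_antisymm (itcone2_subset_tcone2 _ _ _)
      intro z hz
      have h1 : gpp w z ∈ tcone2 (edom φ) (g xb) (dg w) := forward_mem (hgpp w z) hSne hz
      rw [← heq] at h1
      have h2 : Tendsto (fun t : ℝ => infDist ((g xb) + t • (dg w) + (t ^ 2 / 2) • (gpp w z))
          (edom φ) / t ^ 2) (𝓝[>] (0:ℝ)) (𝓝 0) := h1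
      have h3 := reverse_tendsto (τ := fun t : ℝ => t) (hgpp w z) hκ hε hsub
        (eventually_mem_nhdsWithin) (tendsto_id.mono_left nhdsWithin_le_nhds) h2
      exact h3
    · have hu' : u ∈ itcone2 (edom φ) (g xb) (dg w) := by rw [heq]; exact hu
      have hdom : (edom fun x => φ (g x)) = g ⁻¹' edom φ := rfl
      rw [hdom]
      haveI : ProperSpace X := FiniteDimensional.proper ℝ X
      exact tcone2_nonempty (hgpp w 0) hκ hε hsub hSne hu'

end Paper
end
end

section
/- Let θ : ℝ^m → ℝ∪{+∞} be PWTD with polyhedral pieces dom θ = C_1 ∪ … ∪ C_s, locally Lipschitz relative to dom θ, let F : X → ℝ^m be parabolically semidifferentiable on an open set O ⊇ F^{-1}(dom θ), and set f := θ∘F. Fix x̄ ∈ dom f. If the MSQC holds for F(x) ∈ dom θ at x̄, then for every w ∈ T_{dom f}(x̄) the set dom f is parabolically derivable at x̄ for w; more precisely, ∅ ≠ T²_{dom f}(x̄,w) = {z ∈ X : F''(x̄;w,z) ∈ T²_{dom θ}(F(x̄), dF(x̄)(w))} = T^{i,2}_{dom f}(x̄,w). -/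
open Filter Topology Metric Set Pointwise
open scoped RealInnerProductSpace Classical

noncomputable section

namespace Paper



private lemma quad_eventually {α β γ b : ℝ} {τ η : ℕ → ℝ}
    (hτpos : ∀ n, 0 < τ n) (hτ0 : Tendsto τ atTop (𝓝 0))
    (hη : Tendsto (fun n => η n / τ n) atTop (𝓝 0))
    (hηγ : γ = 0 ∨ Tendsto (fun n => η n / (τ n)^2) atTop (𝓝 0))
    (hαb : α ≤ b)
    (hq : ∀ n, α + τ n * β + (τ n)^2/2 * γ ≤ b + η n) :
    ∀ᶠ t in 𝓝[>] (0:ℝ), α + t * β + t^2/2 * γ ≤ b := by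
  rcases lt_or_eq_of_le hαb with hlt | heq
  · have hcont : Tendsto (fun t : ℝ => α + t * β + t^2/2 * γ) (𝓝[>] (0:ℝ)) (𝓝 α) := by
      have h : Tendsto (fun t : ℝ => α + t * β + t^2/2 * γ) (𝓝 (0:ℝ))
          (𝓝 (α + 0 * β + 0^2/2 * γ)) := by
        apply Continuous.tendsto
        continuity
      simpa using h.mono_left nhdsWithin_le_nhds
    exact (hcont.eventually_lt_const hlt).mono fun t ht => ht.le
  · subst heq
    have hβ : β ≤ 0 := by
      have h1 : ∀ n, β + τ n / 2 * γ ≤ η n / τ n := by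
        intro n
        rw [le_div_iff₀ (hτpos n)]
        have := hq n
        nlinarith [sq_nonneg (τ n)]
      have h2 : Tendsto (fun n => β + τ n / 2 * γ) atTop (𝓝 (β + 0/2*γ)) := by
        exact tendsto_const_nhds.add ((hτ0.div_const 2).mul_const γ)
      have := le_of_tendsto_of_tendsto h2 hη (Eventually.of_forall h1)
      simpa using this
    rcases lt_or_eq_of_le hβ with hβlt | hβeq
    · have hcont : Tendsto (fun t : ℝ => β + t/2*γ) (𝓝[>] (0:ℝ)) (𝓝 β) := by
        have h : Tendsto (fun t : ℝ => β + t/2*γ) (𝓝 (0:ℝ)) (𝓝 (β + 0/2*γ)) := by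
          apply Continuous.tendsto; continuity
        simpa using h.mono_left nhdsWithin_le_nhds
      filter_upwards [hcont.eventually_lt_const hβlt, self_mem_nhdsWithin] with t ht ht0
      have ht0' : (0:ℝ) < t := ht0
      nlinarith
    · subst hβeq
      have hγ : γ ≤ 0 := by
      -- β = 0 case
        rcases hηγ with h0 | hη2
        · exact le_of_eq h0
        · have h1 : ∀ n, γ ≤ 2 * (η n / (τ n)^2) := by
            intro n
            have hτ2 : (0:ℝ) < (τ n)^2 := pow_pos (hτpos n) 2
            rw [mul_div_assoc', le_div_iff₀ hτ2]
            have := hq n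
            nlinarith
          have h2 : Tendsto (fun n => 2 * (η n / (τ n)^2)) atTop (𝓝 (2*0)) :=
            tendsto_const_nhds.mul hη2
          have := le_of_tendsto_of_tendsto tendsto_const_nhds h2 (Eventually.of_forall h1)
          simpa using this
      filter_upwards [self_mem_nhdsWithin] with t ht
      have ht0 : (0:ℝ) < t := ht
      nlinarith


private lemma isPolyhedral_closed {X : Type*} [NormedAddCommGroup X] [NormedSpace ℝ X]
    {C : Set X} (hC : IsPolyhedral C) : IsClosed C := by
  obtain ⟨k, a, b, rfl⟩ := hC
  have : {y : X | ∀ i, a i y ≤ b i} = ⋂ i, {y | a i y ≤ b i} := by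
    ext y; simp [Set.mem_iInter]
  rw [this]
  exact isClosed_iInter fun i => isClosed_le (a i).continuous continuous_const

private lemma eventually_mem_union_poly {Y : Type*} [NormedAddCommGroup Y] [NormedSpace ℝ Y]
    {s : ℕ} {C : Fin s → Set Y} (hC : ∀ i, IsPolyhedral (C i)) {y u z : Y}
    {τ : ℕ → ℝ} (hτpos : ∀ n, 0 < τ n) (hτ0 : Tendsto τ atTop (𝓝 0))
    {e : ℕ → ℝ}
    (he : Tendsto (fun n => e n / τ n) atTop (𝓝 0))
    (hez : z = 0 ∨ Tendsto (fun n => e n / (τ n)^2) atTop (𝓝 0))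
    (hdist : ∀ n, infDist (y + τ n • u + ((τ n)^2/2) • z) (⋃ i, C i) ≤ e n)
    (hne : (⋃ i, C i).Nonempty) :
    ∃ i, y ∈ C i ∧ ∀ᶠ t in 𝓝[>] (0:ℝ), y + t • u + (t^2/2) • z ∈ C i := by
  classical
  set q : ℕ → Y := fun n => y + τ n • u + ((τ n)^2/2) • z with hqdef
  set e' : ℕ → ℝ := fun n => max (e n) 0 + τ n ^ 3 with he'def
  have hqe' : ∀ n, infDist (q n) (⋃ i, C i) < e' n := by
    intro n
    have h1 : infDist (q n) (⋃ i, C i) ≤ max (e n) 0 := le_trans (hdist n) (le_max_left _ _)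
    have h2 : (0:ℝ) < τ n ^ 3 := pow_pos (hτpos n) 3
    have h3 : infDist (q n) (⋃ i, C i) < e n ⊔ 0 + τ n ^ 3 := by linarith
    simpa [he'def] using h3
  have hpick : ∀ n, ∃ p ∈ ⋃ i, C i, dist (q n) p < e' n := by
    intro n
    exact (Metric.infDist_lt_iff hne).1 (hqe' n)
  choose p hp hdp using hpick
  choose idx hidx using fun n => Set.mem_iUnion.1 (hp n)
  obtain ⟨i, hinf⟩ := Finite.exists_infinite_fiber idx
  have hsinf : (idx ⁻¹' {i}).Infinite := Set.infinite_coe_iff.mp hinf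
  set σemb := hsinf.natEmbedding with hσembdef
  set σ : ℕ → ℕ := fun n => (σemb n : ℕ) with hσdef
  have hσidx : ∀ n, idx (σ n) = i := fun n => (σemb n).2
  have hσinj : Function.Injective σ := Subtype.val_injective.comp σemb.injective
  have hσtop : Tendsto σ atTop atTop := by
    have h := hσinj.tendsto_cofinite
    rwa [Nat.cofinite_eq_atTop] at h
  -- limits of e'/τ and e'/τ^2
  have he'τ : Tendsto (fun n => e' n / τ n) atTop (𝓝 0) := by
    have h1 : ∀ n, e' n / τ n = max (e n / τ n) 0 + τ n ^ 2 := by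
      intro n
      have hτn := (hτpos n).le
      have h3 : τ n ^ 3 / τ n = τ n ^ 2 := by
        rw [pow_succ, mul_div_assoc, div_self (hτpos n).ne', mul_one]
      rw [he'def]
      simp only
      rw [add_div, ← max_div_div_right hτn, zero_div, h3]
    have h2 : Tendsto (fun n => max (e n / τ n) 0 + τ n ^ 2) atTop (𝓝 (max 0 0 + 0)) := by
      exact (he.max tendsto_const_nhds).add (by simpa using hτ0.pow 2)
    simp only [max_self, add_zero] at h2
    exact h2.congr fun n => (h1 n).symm
  have he'0 : Tendsto e' atTop (𝓝 0) := by
    have : Tendsto (fun n => (e' n / τ n) * τ n) atTop (𝓝 (0 * 0)) := he'τ.mul hτ0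
    simp only [zero_mul] at this
    refine this.congr fun n => ?_
    rw [div_mul_cancel₀ _ (hτpos n).ne']
  -- p ∘ σ ∈ C i
  have hpC : ∀ n, p (σ n) ∈ C i := by
    intro n
    have := hidx (σ n)
    rwa [hσidx n] at this
  -- q ∘ σ → y
  have hτ'0 : Tendsto (fun n => τ (σ n)) atTop (𝓝 0) := hτ0.comp hσtop
  have hqlim : Tendsto (fun n => q (σ n)) atTop (𝓝 y) := by
    have hcontf : Continuous fun t : ℝ => y + t • u + (t^2/2) • z :=
      (continuous_const.add (continuous_id.smul continuous_const)).add
        (((continuous_pow 2).div_const 2).smul continuous_const)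
    have hcont : Tendsto (fun t : ℝ => y + t • u + (t^2/2) • z) (𝓝 0)
        (𝓝 (y + (0:ℝ) • u + ((0:ℝ)^2/2) • z)) := hcontf.tendsto 0
    simp only [zero_smul, add_zero, ne_eq, OfNat.ofNat_ne_zero, not_false_eq_true,
      zero_pow, zero_div] at hcont
    have := hcont.comp hτ'0
    exact this.congr fun n => rfl
  have hplim : Tendsto (fun n => p (σ n)) atTop (𝓝 y) := by
    rw [tendsto_iff_dist_tendsto_zero]
    have hb : ∀ n, dist (p (σ n)) y ≤ e' (σ n) + dist (q (σ n)) y := by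
      intro n
      calc dist (p (σ n)) y ≤ dist (p (σ n)) (q (σ n)) + dist (q (σ n)) y := dist_triangle _ _ _
        _ ≤ e' (σ n) + dist (q (σ n)) y := by
            have := hdp (σ n)
            rw [dist_comm] at this
            linarith
    have h2 : Tendsto (fun n => e' (σ n) + dist (q (σ n)) y) atTop (𝓝 (0 + 0)) := by
      refine (he'0.comp hσtop).add ?_
      exact (tendsto_iff_dist_tendsto_zero.1 hqlim)
    rw [add_zero] at h2
    exact squeeze_zero (fun n => dist_nonneg) hb h2
  have hyCi : y ∈ C i :=
    (isPolyhedral_closed (hC i)).mem_of_tendsto hplim (Eventually.of_forall hpC)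
  refine ⟨i, hyCi, ?_⟩
  obtain ⟨k, a, b, hCi⟩ := hC i
  have haq : ∀ j, ∀ᶠ t in 𝓝[>] (0:ℝ), a j y + t * a j u + t^2/2 * a j z ≤ b j := by
    intro j
    have hαb : a j y ≤ b j := by
      rw [hCi] at hyCi
      exact hyCi j
    refine quad_eventually (τ := fun n => τ (σ n)) (η := fun n => ‖a j‖ * e' (σ n))
      (fun n => hτpos (σ n)) hτ'0 ?_ ?_ hαb ?_
    · have h1 : Tendsto (fun n => ‖a j‖ * (e' (σ n) / τ (σ n))) atTop (𝓝 (‖a j‖ * 0)) :=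
        tendsto_const_nhds.mul (he'τ.comp hσtop)
      rw [mul_zero] at h1
      exact h1.congr fun n => (mul_div_assoc _ _ _).symm
    · rcases hez with hz0 | he2
      · left; rw [hz0, map_zero]
      · right
        have he'τ2 : Tendsto (fun n => e' n / (τ n)^2) atTop (𝓝 0) := by
          have h1 : ∀ n, e' n / (τ n)^2 = max (e n / (τ n)^2) 0 + τ n := by
            intro n
            have hτn : (0:ℝ) ≤ (τ n)^2 := sq_nonneg _
            have h3 : τ n ^ 3 / τ n ^ 2 = τ n := by
              rw [div_eq_iff (pow_ne_zero 2 (hτpos n).ne')]; ring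
            rw [he'def]
            simp only
            rw [add_div, ← max_div_div_right hτn, zero_div, h3]
          have h2 : Tendsto (fun n => max (e n / (τ n)^2) 0 + τ n) atTop (𝓝 (max 0 0 + 0)) :=
            (he2.max tendsto_const_nhds).add hτ0
          simp only [max_self, add_zero] at h2
          exact h2.congr fun n => (h1 n).symm
        have h1 : Tendsto (fun n => ‖a j‖ * (e' (σ n) / (τ (σ n))^2)) atTop (𝓝 (‖a j‖ * 0)) :=
          tendsto_const_nhds.mul (he'τ2.comp hσtop)
        rw [mul_zero] at h1
        exact h1.congr fun n => (mul_div_assoc _ _ _).symm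
    · intro n
      have hpj : a j (p (σ n)) ≤ b j := by
        have := hpC n
        rw [hCi] at this
        exact this j
      have hqform : a j (q (σ n)) = a j y + τ (σ n) * a j u + (τ (σ n))^2/2 * a j z := by
        simp [hqdef, map_add, map_smul, smul_eq_mul]
      have hbound : a j (q (σ n)) - a j (p (σ n)) ≤ ‖a j‖ * e' (σ n) := by
        calc a j (q (σ n)) - a j (p (σ n)) = a j (q (σ n) - p (σ n)) := by rw [map_sub]
          _ ≤ ‖a j (q (σ n) - p (σ n))‖ := le_abs_self _
          _ ≤ ‖a j‖ * ‖q (σ n) - p (σ n)‖ := (a j).le_opNorm _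
          _ ≤ ‖a j‖ * e' (σ n) := by
              refine mul_le_mul_of_nonneg_left ?_ (norm_nonneg _)
              rw [← dist_eq_norm]
              exact (hdp (σ n)).le
      show (a j) y + τ (σ n) * (a j) u + (τ (σ n))^2/2 * (a j) z ≤ b j + ‖a j‖ * e' (σ n)
      rw [← hqform]
      linarith
  have hall : ∀ᶠ t in 𝓝[>] (0:ℝ), ∀ j, a j y + t * a j u + t^2/2 * a j z ≤ b j :=
    eventually_all.2 haq
  filter_upwards [hall] with t ht
  rw [hCi]
  intro j
  have hform : a j (y + t • u + (t^2/2) • z) = a j y + t * a j u + t^2/2 * a j z := by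
    simp [map_add, map_smul, smul_eq_mul]
  rw [hform]
  exact ht j

set_option maxHeartbeats 4000000 in
/-- Corollary 2.1 (parabolic derivability of the domain of `f = θ ∘ F`). -/
theorem statement3
    {X : Type*} [NormedAddCommGroup X] [InnerProductSpace ℝ X] [FiniteDimensional ℝ X]
    {m s : ℕ} (θ : EuclideanSpace ℝ (Fin m) → EReal)
    (C : Fin s → Set (EuclideanSpace ℝ (Fin m)))
    (sel : Fin s → EuclideanSpace ℝ (Fin m) → ℝ)
    (hθ : IsPWTD θ C sel) (hlip : LipRelDom θ)
    (F : X → EuclideanSpace ℝ (Fin m))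
    (hF : ∃ O : Set X, IsOpen O ∧ F ⁻¹' edom θ ⊆ O ∧ ∀ x ∈ O, ParaSemidiffAt F x)
    (xb : X) (hxb : θ (F xb) ≠ ⊤)
    (dF : X → EuclideanSpace ℝ (Fin m)) (Fpp : X → X → EuclideanSpace ℝ (Fin m))
    (hdF : ∀ w, HasSemideriv F xb w (dF w))
    (hFpp : ∀ w z, HasParaSemideriv F xb w (dF w) z (Fpp w z))
    (hMSQC : MSQC F (edom θ) xb) :
    ∀ w ∈ tcone (edom fun x => θ (F x)) xb,
      ParabolicallyDerivable (edom fun x => θ (F x)) xb w ∧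
      (tcone2 (edom fun x => θ (F x)) xb w).Nonempty ∧
      tcone2 (edom fun x => θ (F x)) xb w
        = {z : X | Fpp w z ∈ tcone2 (edom θ) (F xb) (dF w)} ∧
      tcone2 (edom fun x => θ (F x)) xb w = itcone2 (edom fun x => θ (F x)) xb w := by
  classical
  intro w hw
  haveI : ProperSpace X := FiniteDimensional.proper ℝ X
  rw [show (edom fun x => θ (F x)) = F ⁻¹' edom θ from rfl] at hw ⊢
  set Df : Set X := F ⁻¹' edom θ with hDfdef
  have hyD : F xb ∈ edom θ := hxb
  have hDne : (edom θ).Nonempty := ⟨F xb, hyD⟩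
  have hDfne : Df.Nonempty := ⟨xb, hxb⟩
  have hDunion : edom θ = ⋃ i, C i := hθ.dom_eq
  have hUne : (⋃ i, C i).Nonempty := hDunion ▸ hDne
  obtain ⟨κ, hκ, ε, hε, hsub⟩ := hMSQC
  -- sequential form of the parabolic expansion of F
  have hFppseq : ∀ (v : X) (zk : ℕ → X) (τk : ℕ → ℝ), (∀ n, 0 < τk n) →
      Tendsto τk atTop (𝓝 0) → Tendsto zk atTop (𝓝 v) →
      Tendsto (fun n => (2/(τk n)^2) •
          (F (xb + τk n • w + ((τk n)^2/2) • zk n) - F xb - τk n • dF w))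
        atTop (𝓝 (Fpp w v)) := by
    intro v zk τk h1 h2 h3
    have hτmem : Tendsto τk atTop (𝓝[>] (0:ℝ)) :=
      tendsto_nhdsWithin_of_tendsto_nhds_of_eventually_within _ h2
        (Eventually.of_forall fun n => h1 n)
    have h0 : Tendsto (fun p : ℝ × X =>
        (2 / p.1 ^ 2) • (F (xb + p.1 • w + (p.1 ^ 2 / 2) • p.2) - F xb - p.1 • dF w))
        ((𝓝[>] (0:ℝ)) ×ˢ 𝓝 v) (𝓝 (Fpp w v)) := hFpp w v
    exact (h0.comp (hτmem.prodMk h3)).congr fun n => rfl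
  -- continuous-parameter form
  have hFppt : ∀ v : X, Tendsto (fun t : ℝ => (2/t^2) •
      (F (xb + t • w + (t^2/2) • v) - F xb - t • dF w)) (𝓝[>] (0:ℝ)) (𝓝 (Fpp w v)) := by
    intro v
    have h0 : Tendsto (fun p : ℝ × X =>
        (2 / p.1 ^ 2) • (F (xb + p.1 • w + (p.1 ^ 2 / 2) • p.2) - F xb - p.1 • dF w))
        ((𝓝[>] (0:ℝ)) ×ˢ 𝓝 v) (𝓝 (Fpp w v)) := hFpp w v
    exact (h0.comp (tendsto_id.prodMk tendsto_const_nhds)).congr fun t => rfl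
  ------------------------------------------------------------------
  -- Step 1 : dF w ∈ tcone (edom θ) (F xb)
  ------------------------------------------------------------------
  obtain ⟨τ₁, hτ₁pos, hτ₁0, hτ₁lim⟩ := hw
  have hpick1 : ∀ n, ∃ x ∈ Df, dist (xb + τ₁ n • w) x
      < infDist (xb + τ₁ n • w) Df + τ₁ n ^ 2 := by
    intro n
    exact (Metric.infDist_lt_iff hDfne).1 (lt_add_of_pos_right _ (pow_pos (hτ₁pos n) 2))
  choose x₁ hx₁ hdx₁ using hpick1
  set w₁ : ℕ → X := fun n => w + (τ₁ n)⁻¹ • (x₁ n - (xb + τ₁ n • w)) with hw₁def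
  have hx₁eq : ∀ n, xb + τ₁ n • w₁ n = x₁ n := by
    intro n
    have h1 : τ₁ n • w₁ n = τ₁ n • w + (x₁ n - (xb + τ₁ n • w)) := by
      rw [hw₁def]
      simp only
      rw [smul_add, smul_smul, mul_inv_cancel₀ (hτ₁pos n).ne', one_smul]
    rw [h1]; abel
  have hw₁lim : Tendsto w₁ atTop (𝓝 w) := by
    rw [tendsto_iff_norm_sub_tendsto_zero]
    have hb : ∀ n, ‖w₁ n - w‖ ≤ infDist (xb + τ₁ n • w) Df / τ₁ n + τ₁ n := by
      intro n
      have h1 : w₁ n - w = (τ₁ n)⁻¹ • (x₁ n - (xb + τ₁ n • w)) := by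
        rw [hw₁def]; simp only; abel
      rw [h1, norm_smul, norm_inv, Real.norm_eq_abs, abs_of_pos (hτ₁pos n),
        ← dist_eq_norm']
      have h2 : (τ₁ n)⁻¹ * dist (xb + τ₁ n • w) (x₁ n)
          ≤ (τ₁ n)⁻¹ * (infDist (xb + τ₁ n • w) Df + τ₁ n ^ 2) :=
        mul_le_mul_of_nonneg_left (hdx₁ n).le (inv_nonneg.2 (hτ₁pos n).le)
      refine h2.trans (le_of_eq ?_)
      rw [mul_add, ← div_eq_inv_mul]
      congr 1
      rw [pow_two, inv_mul_cancel_left₀ (hτ₁pos n).ne']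
    have hg : Tendsto (fun n => infDist (xb + τ₁ n • w) Df / τ₁ n + τ₁ n)
        atTop (𝓝 (0 + 0)) := hτ₁lim.add hτ₁0
    rw [add_zero] at hg
    exact squeeze_zero (fun n => norm_nonneg _) hb hg
  have hFx₁ : Tendsto (fun n => (τ₁ n)⁻¹ • (F (x₁ n) - F xb)) atTop (𝓝 (dF w)) := by
    have hτmem : Tendsto τ₁ atTop (𝓝[>] (0:ℝ)) :=
      tendsto_nhdsWithin_of_tendsto_nhds_of_eventually_within _ hτ₁0
        (Eventually.of_forall fun n => hτ₁pos n)
    have h0 : Tendsto (fun p : ℝ × X => (p.1)⁻¹ • (F (xb + p.1 • p.2) - F xb))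
        ((𝓝[>] (0:ℝ)) ×ˢ 𝓝 w) (𝓝 (dF w)) := hdF w
    have h : Tendsto (fun n => (τ₁ n)⁻¹ • (F (xb + τ₁ n • w₁ n) - F xb)) atTop (𝓝 (dF w)) :=
      (h0.comp (hτmem.prodMk hw₁lim)).congr fun n => rfl
    refine h.congr fun n => ?_
    rw [hx₁eq n]
  have hq1lim : Tendsto (fun n => infDist (F xb + τ₁ n • dF w) (edom θ) / τ₁ n)
      atTop (𝓝 0) := by
    have hb : ∀ n, infDist (F xb + τ₁ n • dF w) (edom θ) / τ₁ n
        ≤ ‖dF w - (τ₁ n)⁻¹ • (F (x₁ n) - F xb)‖ := by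
      intro n
      have hFx : F (x₁ n) ∈ edom θ := hx₁ n
      have h2 : F xb + τ₁ n • dF w - F (x₁ n)
          = τ₁ n • (dF w - (τ₁ n)⁻¹ • (F (x₁ n) - F xb)) := by
        rw [smul_sub, smul_smul, mul_inv_cancel₀ (hτ₁pos n).ne', one_smul]
        abel
      have h3 : infDist (F xb + τ₁ n • dF w) (edom θ)
          ≤ τ₁ n * ‖dF w - (τ₁ n)⁻¹ • (F (x₁ n) - F xb)‖ := by
        calc infDist (F xb + τ₁ n • dF w) (edom θ)
            ≤ dist (F xb + τ₁ n • dF w) (F (x₁ n)) := infDist_le_dist_of_mem hFx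
          _ = τ₁ n * ‖dF w - (τ₁ n)⁻¹ • (F (x₁ n) - F xb)‖ := by
              rw [dist_eq_norm, h2, norm_smul, Real.norm_eq_abs, abs_of_pos (hτ₁pos n)]
      rw [div_le_iff₀ (hτ₁pos n), mul_comm]
      exact h3
    have hg : Tendsto (fun n => ‖dF w - (τ₁ n)⁻¹ • (F (x₁ n) - F xb)‖) atTop
        (𝓝 ‖dF w - dF w‖) := (tendsto_const_nhds.sub hFx₁).norm
    rw [sub_self, norm_zero] at hg
    exact squeeze_zero (fun n => div_nonneg infDist_nonneg (hτ₁pos n).le) hb hg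
  have hstep1 : dF w ∈ tcone (edom θ) (F xb) := ⟨τ₁, hτ₁pos, hτ₁0, hq1lim⟩
  ------------------------------------------------------------------
  -- Step 2 : eventually F xb + t • dF w ∈ edom θ
  ------------------------------------------------------------------
  have hev1 : ∀ᶠ t in 𝓝[>] (0:ℝ), F xb + t • dF w ∈ edom θ := by
    obtain ⟨i₀, hyCi₀, hev0⟩ := eventually_mem_union_poly hθ.polyhedral hτ₁pos hτ₁0
      (e := fun n => infDist (F xb + τ₁ n • dF w) (edom θ)) hq1lim
      (Or.inl rfl)
      (fun n => by
        simp only [smul_zero, add_zero]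
        rw [← hDunion])
      hUne
    filter_upwards [hev0] with t ht
    rw [hDunion]
    simp only [smul_zero, add_zero] at ht
    exact Set.mem_iUnion.2 ⟨i₀, ht⟩
  ------------------------------------------------------------------
  -- Step 3/4 : infDist (xb + t • w) Df = O(t²)
  ------------------------------------------------------------------
  have hexp0 : Tendsto (fun t : ℝ => (2/t^2) • (F (xb + t • w) - F xb - t • dF w))
      (𝓝[>] (0:ℝ)) (𝓝 (Fpp w 0)) := by
    refine (hFppt 0).congr fun t => ?_
    simp only [smul_zero, add_zero]
  set M : ℝ := κ * (‖Fpp w 0‖ + 1) with hMdef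
  have hbound : ∀ᶠ t in 𝓝[>] (0:ℝ), infDist (xb + t • w) Df ≤ M * t^2/2 := by
    have hnb : ∀ᶠ t in 𝓝[>] (0:ℝ),
        ‖(2/t^2) • (F (xb + t • w) - F xb - t • dF w)‖ < ‖Fpp w 0‖ + 1 :=
      hexp0.norm.eventually_lt_const (by linarith [norm_nonneg (Fpp w 0)])
    have hsm : Tendsto (fun t : ℝ => t • w) (𝓝[>] (0:ℝ)) (𝓝 ((0:ℝ) • w)) :=
      ((continuous_id.smul continuous_const).tendsto 0).mono_left nhdsWithin_le_nhds
    rw [zero_smul] at hsm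
    have hsmn := hsm.norm
    rw [norm_zero] at hsmn
    have hsmall : ∀ᶠ t in 𝓝[>] (0:ℝ), ‖xb + t • w - xb‖ ≤ ε := by
      filter_upwards [hsmn.eventually_lt_const hε] with t ht
      rw [add_sub_cancel_left]
      exact ht.le
    filter_upwards [hnb, hev1, hsmall, self_mem_nhdsWithin] with t h1 h2 h3 ht
    have ht0 : (0:ℝ) < t := ht
    have hmsqc := hsub (xb + t • w) h3
    have hFd : infDist (F (xb + t • w)) (edom θ) ≤ ‖F (xb + t • w) - F xb - t • dF w‖ := by
      calc infDist (F (xb + t • w)) (edom θ)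
          ≤ dist (F (xb + t • w)) (F xb + t • dF w) := infDist_le_dist_of_mem h2
        _ = ‖F (xb + t • w) - F xb - t • dF w‖ := by
            rw [dist_eq_norm, sub_add_eq_sub_sub]
    have h2t : (0:ℝ) < 2/t^2 := div_pos two_pos (pow_pos ht0 2)
    rw [norm_smul, Real.norm_eq_abs, abs_of_pos h2t] at h1
    have hnorm2 : ‖F (xb + t • w) - F xb - t • dF w‖ ≤ (‖Fpp w 0‖ + 1) * (t^2/2) := by
      have he : ‖F (xb + t • w) - F xb - t • dF w‖
          = (2/t^2 * ‖F (xb + t • w) - F xb - t • dF w‖) * (t^2/2) := by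
        field_simp
      rw [he]
      exact mul_le_mul_of_nonneg_right h1.le (by positivity)
    calc infDist (xb + t • w) Df ≤ κ * infDist (F (xb + t • w)) (edom θ) := hmsqc
      _ ≤ κ * ((‖Fpp w 0‖ + 1) * (t^2/2)) :=
          mul_le_mul_of_nonneg_left (hFd.trans hnorm2) hκ.le
      _ = M * t^2/2 := by rw [hMdef]; ring
  ------------------------------------------------------------------
  -- Step 5 : nonemptiness of tcone2 Df xb w
  ------------------------------------------------------------------
  obtain ⟨δ₀, hδ₀, hδ₀sub⟩ : ∃ δ, δ > 0 ∧
      ∀ t ∈ Ioc (0:ℝ) δ, infDist (xb + t • w) Df ≤ M * t^2/2 := by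
    obtain ⟨u, hu, husub⟩ := mem_nhdsGT_iff_exists_Ioc_subset.1 hbound
    exact ⟨u, hu, fun t ht => husub ht⟩
  set τ₂ : ℕ → ℝ := fun n => δ₀ / (n + 1) with hτ₂def
  have hτ₂pos : ∀ n, 0 < τ₂ n := fun n => by positivity
  have hτ₂le : ∀ n, τ₂ n ≤ δ₀ := by
    intro n
    rw [hτ₂def]
    simp only
    rw [div_le_iff₀ (by positivity : (0:ℝ) < (n:ℝ) + 1)]
    nlinarith [Nat.cast_nonneg (α := ℝ) n]
  have hτ₂0 : Tendsto τ₂ atTop (𝓝 0) := by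
    apply Tendsto.div_atTop tendsto_const_nhds
    exact tendsto_atTop_add_const_right atTop 1 tendsto_natCast_atTop_atTop
  have hpick2 : ∀ n, ∃ x ∈ Df, dist (xb + τ₂ n • w) x < M * (τ₂ n)^2/2 + (τ₂ n)^3 := by
    intro n
    apply (Metric.infDist_lt_iff hDfne).1
    have h1 := hδ₀sub (τ₂ n) ⟨hτ₂pos n, hτ₂le n⟩
    have h2 : (0:ℝ) < (τ₂ n)^3 := pow_pos (hτ₂pos n) 3
    linarith
  choose x₂ hx₂ hdx₂ using hpick2
  set z₂ : ℕ → X := fun n => (2/(τ₂ n)^2) • (x₂ n - xb - τ₂ n • w) with hz₂def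
  have hx₂eq : ∀ n, xb + τ₂ n • w + ((τ₂ n)^2/2) • z₂ n = x₂ n := by
    intro n
    have hc : (τ₂ n)^2/2 * (2/(τ₂ n)^2) = 1 := by
      have hτn : (τ₂ n : ℝ) ≠ 0 := (hτ₂pos n).ne'
      field_simp
    rw [hz₂def]
    simp only
    rw [smul_smul, hc, one_smul]
    abel
  have hz₂bdd : ∀ n, ‖z₂ n‖ ≤ M + 2 * δ₀ := by
    intro n
    have h2t : (0:ℝ) < 2/(τ₂ n)^2 := div_pos two_pos (pow_pos (hτ₂pos n) 2)
    have h1 : ‖z₂ n‖ = 2/(τ₂ n)^2 * dist (xb + τ₂ n • w) (x₂ n) := by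
      rw [hz₂def]
      simp only
      rw [norm_smul, Real.norm_eq_abs, abs_of_pos h2t, sub_sub, ← dist_eq_norm']
    have h2 : 2/(τ₂ n)^2 * (M * (τ₂ n)^2/2 + (τ₂ n)^3) = M + 2 * τ₂ n := by
      have hτn : (τ₂ n : ℝ) ≠ 0 := (hτ₂pos n).ne'
      field_simp
    rw [h1]
    have h3 : 2/(τ₂ n)^2 * dist (xb + τ₂ n • w) (x₂ n)
        ≤ 2/(τ₂ n)^2 * (M * (τ₂ n)^2/2 + (τ₂ n)^3) :=
      mul_le_mul_of_nonneg_left (hdx₂ n).le h2t.le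
    rw [h2] at h3
    linarith [hτ₂le n]
  obtain ⟨zinf, -, φ, hφmono, hφlim⟩ :=
    (isCompact_closedBall (0:X) (M + 2*δ₀)).tendsto_subseq
      (fun n => mem_closedBall_zero_iff.2 (hz₂bdd n))
  have hzinfmem : zinf ∈ tcone2 Df xb w := by
    refine ⟨fun n => τ₂ (φ n), fun n => hτ₂pos _, hτ₂0.comp hφmono.tendsto_atTop, ?_⟩
    have hb : ∀ n, infDist (xb + τ₂ (φ n) • w + ((τ₂ (φ n))^2/2) • zinf) Df / (τ₂ (φ n))^2
        ≤ (1/2) * ‖zinf - z₂ (φ n)‖ := by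
      intro n
      have hkey : xb + τ₂ (φ n) • w + ((τ₂ (φ n))^2/2) • zinf - x₂ (φ n)
          = ((τ₂ (φ n))^2/2) • (zinf - z₂ (φ n)) := by
        rw [smul_sub, ← hx₂eq (φ n)]
        abel
      have h1 : infDist (xb + τ₂ (φ n) • w + ((τ₂ (φ n))^2/2) • zinf) Df
          ≤ (τ₂ (φ n))^2/2 * ‖zinf - z₂ (φ n)‖ := by
        calc infDist (xb + τ₂ (φ n) • w + ((τ₂ (φ n))^2/2) • zinf) Df
            ≤ dist (xb + τ₂ (φ n) • w + ((τ₂ (φ n))^2/2) • zinf) (x₂ (φ n)) :=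
              infDist_le_dist_of_mem (hx₂ (φ n))
          _ = (τ₂ (φ n))^2/2 * ‖zinf - z₂ (φ n)‖ := by
              rw [dist_eq_norm, hkey, norm_smul, Real.norm_eq_abs,
                abs_of_pos (div_pos (pow_pos (hτ₂pos (φ n)) 2) two_pos)]
      rw [div_le_iff₀ (pow_pos (hτ₂pos (φ n)) 2)]
      calc infDist (xb + τ₂ (φ n) • w + ((τ₂ (φ n))^2/2) • zinf) Df
          ≤ (τ₂ (φ n))^2/2 * ‖zinf - z₂ (φ n)‖ := h1
        _ = 1/2 * ‖zinf - z₂ (φ n)‖ * (τ₂ (φ n))^2 := by ring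
    have hg : Tendsto (fun n => (1/2) * ‖zinf - z₂ (φ n)‖) atTop (𝓝 ((1/2) * ‖zinf - zinf‖)) :=
      ((tendsto_const_nhds.sub hφlim).norm).const_mul _
    rw [sub_self, norm_zero, mul_zero] at hg
    exact squeeze_zero (fun n => div_nonneg infDist_nonneg (sq_nonneg _)) hb hg
  have hne5 : (tcone2 Df xb w).Nonempty := ⟨zinf, hzinfmem⟩
  ------------------------------------------------------------------
  -- Step 6 : tcone2 Df xb w ⊆ S
  ------------------------------------------------------------------
  have hstep6 : tcone2 Df xb w ⊆ {z : X | Fpp w z ∈ tcone2 (edom θ) (F xb) (dF w)} := by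
    intro z hz
    obtain ⟨τ, hτpos, hτ0, hτlim⟩ := hz
    have hpick : ∀ n, ∃ x ∈ Df, dist (xb + τ n • w + ((τ n)^2/2) • z) x
        < infDist (xb + τ n • w + ((τ n)^2/2) • z) Df + (τ n)^3 := by
      intro n
      exact (Metric.infDist_lt_iff hDfne).1 (lt_add_of_pos_right _ (pow_pos (hτpos n) 3))
    choose x₃ hx₃ hdx₃ using hpick
    set z₃ : ℕ → X := fun n => (2/(τ n)^2) • (x₃ n - xb - τ n • w) with hz₃def
    have hx₃eq : ∀ n, xb + τ n • w + ((τ n)^2/2) • z₃ n = x₃ n := by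
      intro n
      have hc : (τ n)^2/2 * (2/(τ n)^2) = 1 := by
        have hτn : (τ n : ℝ) ≠ 0 := (hτpos n).ne'
        field_simp
      rw [hz₃def]
      simp only
      rw [smul_smul, hc, one_smul]
      abel
    have hkey : ∀ n, z₃ n - z
        = (2/(τ n)^2) • (x₃ n - (xb + τ n • w + ((τ n)^2/2) • z)) := by
      intro n
      have hc : (2/(τ n)^2) * ((τ n)^2/2) = 1 := by
        have hτn : (τ n : ℝ) ≠ 0 := (hτpos n).ne'
        field_simp
      have h1 : x₃ n - (xb + τ n • w + ((τ n)^2/2) • z)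
          = (x₃ n - xb - τ n • w) - ((τ n)^2/2) • z := by abel
      rw [h1, smul_sub, smul_smul, hc, one_smul, hz₃def]
    have hz₃lim : Tendsto z₃ atTop (𝓝 z) := by
      rw [tendsto_iff_norm_sub_tendsto_zero]
      have hb : ∀ n, ‖z₃ n - z‖
          ≤ 2 * (infDist (xb + τ n • w + ((τ n)^2/2) • z) Df / (τ n)^2 + τ n) := by
        intro n
        have h2t : (0:ℝ) < 2/(τ n)^2 := div_pos two_pos (pow_pos (hτpos n) 2)
        rw [hkey n, norm_smul, Real.norm_eq_abs, abs_of_pos h2t, ← dist_eq_norm']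
        have h3 : 2/(τ n)^2 * dist (xb + τ n • w + ((τ n)^2/2) • z) (x₃ n)
            ≤ 2/(τ n)^2 * (infDist (xb + τ n • w + ((τ n)^2/2) • z) Df + (τ n)^3) :=
          mul_le_mul_of_nonneg_left (hdx₃ n).le h2t.le
        refine h3.trans (le_of_eq ?_)
        have hτn : (τ n : ℝ) ≠ 0 := (hτpos n).ne'
        field_simp
      have hg : Tendsto (fun n =>
          2 * (infDist (xb + τ n • w + ((τ n)^2/2) • z) Df / (τ n)^2 + τ n)) atTop
          (𝓝 (2 * (0 + 0))) := (hτlim.add hτ0).const_mul 2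
      norm_num at hg
      exact squeeze_zero (fun n => norm_nonneg _) hb hg
    have hFx₃ : Tendsto (fun n => (2/(τ n)^2) • (F (x₃ n) - F xb - τ n • dF w))
        atTop (𝓝 (Fpp w z)) := by
      have h := hFppseq z z₃ τ hτpos hτ0 hz₃lim
      refine h.congr fun n => ?_
      rw [hx₃eq n]
    refine ⟨τ, hτpos, hτ0, ?_⟩
    have hb : ∀ n, infDist (F xb + τ n • dF w + ((τ n)^2/2) • Fpp w z) (edom θ) / (τ n)^2
        ≤ (1/2) * ‖Fpp w z - (2/(τ n)^2) • (F (x₃ n) - F xb - τ n • dF w)‖ := by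
      intro n
      have hc : (τ n)^2/2 * (2/(τ n)^2) = 1 := by
        have hτn : (τ n : ℝ) ≠ 0 := (hτpos n).ne'
        field_simp
      have hkey2 : F xb + τ n • dF w + ((τ n)^2/2) • Fpp w z - F (x₃ n)
          = ((τ n)^2/2) • (Fpp w z - (2/(τ n)^2) • (F (x₃ n) - F xb - τ n • dF w)) := by
        rw [smul_sub, smul_smul, hc, one_smul]
        abel
      have h1 : infDist (F xb + τ n • dF w + ((τ n)^2/2) • Fpp w z) (edom θ)
          ≤ (τ n)^2/2 * ‖Fpp w z - (2/(τ n)^2) • (F (x₃ n) - F xb - τ n • dF w)‖ := by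
        calc infDist (F xb + τ n • dF w + ((τ n)^2/2) • Fpp w z) (edom θ)
            ≤ dist (F xb + τ n • dF w + ((τ n)^2/2) • Fpp w z) (F (x₃ n)) :=
              infDist_le_dist_of_mem (hx₃ n)
          _ = (τ n)^2/2 * ‖Fpp w z - (2/(τ n)^2) • (F (x₃ n) - F xb - τ n • dF w)‖ := by
              rw [dist_eq_norm, hkey2, norm_smul, Real.norm_eq_abs,
                abs_of_pos (div_pos (pow_pos (hτpos n) 2) two_pos)]
      rw [div_le_iff₀ (pow_pos (hτpos n) 2)]
      refine h1.trans (le_of_eq ?_)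
      ring
    have hg : Tendsto (fun n =>
        (1/2) * ‖Fpp w z - (2/(τ n)^2) • (F (x₃ n) - F xb - τ n • dF w)‖) atTop
        (𝓝 ((1/2) * ‖Fpp w z - Fpp w z‖)) :=
      ((tendsto_const_nhds.sub hFx₃).norm).const_mul _
    rw [sub_self, norm_zero, mul_zero] at hg
    exact squeeze_zero (fun n => div_nonneg infDist_nonneg (sq_nonneg _)) hb hg
  ------------------------------------------------------------------
  -- Step 7 : S ⊆ itcone2 Df xb w
  ------------------------------------------------------------------
  have hstep7 : {z : X | Fpp w z ∈ tcone2 (edom θ) (F xb) (dF w)} ⊆ itcone2 Df xb w := by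
    intro z hzS
    obtain ⟨τ, hτpos, hτ0, hτlim⟩ := hzS
    have he1 : Tendsto (fun n =>
        infDist (F xb + τ n • dF w + ((τ n)^2/2) • Fpp w z) (edom θ) / τ n)
        atTop (𝓝 0) := by
      have h := hτlim.mul hτ0
      rw [zero_mul] at h
      refine h.congr fun n => ?_
      rw [div_mul_eq_mul_div, pow_two, mul_div_mul_right _ _ (hτpos n).ne']
    obtain ⟨i₁, hyCi₁, hev2⟩ := eventually_mem_union_poly hθ.polyhedral hτpos hτ0
      (e := fun n => infDist (F xb + τ n • dF w + ((τ n)^2/2) • Fpp w z) (edom θ))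
      he1 (Or.inr hτlim)
      (fun n => by rw [← hDunion]) hUne
    have hevD : ∀ᶠ t in 𝓝[>] (0:ℝ),
        F xb + t • dF w + (t^2/2) • Fpp w z ∈ edom θ := by
      filter_upwards [hev2] with t ht
      rw [hDunion]
      exact Set.mem_iUnion.2 ⟨i₁, ht⟩
    have hexpz := hFppt z
    have hsm : Tendsto (fun t : ℝ => t • w + (t^2/2) • z) (𝓝[>] (0:ℝ))
        (𝓝 ((0:ℝ) • w + ((0:ℝ)^2/2) • z)) := by
      have hcontf : Continuous fun t : ℝ => t • w + (t^2/2) • z :=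
        (continuous_id.smul continuous_const).add
          (((continuous_pow 2).div_const 2).smul continuous_const)
      exact (hcontf.tendsto 0).mono_left nhdsWithin_le_nhds
    simp only [zero_smul, add_zero, ne_eq, OfNat.ofNat_ne_zero, not_false_eq_true,
      zero_pow, zero_div] at hsm
    have hsmn := hsm.norm
    rw [norm_zero] at hsmn
    have hsmall : ∀ᶠ t in 𝓝[>] (0:ℝ), ‖xb + t • w + (t^2/2) • z - xb‖ ≤ ε := by
      filter_upwards [hsmn.eventually_lt_const hε] with t ht
      have h1 : xb + t • w + (t^2/2) • z - xb = t • w + (t^2/2) • z := by abel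
      rw [h1]
      exact ht.le
    apply squeeze_zero'
      (g := fun t => (κ/2) * ‖(2/t^2) • (F (xb + t • w + (t^2/2) • z) - F xb - t • dF w)
        - Fpp w z‖)
    · exact Eventually.of_forall fun t => div_nonneg infDist_nonneg (sq_nonneg _)
    · filter_upwards [hevD, hsmall, self_mem_nhdsWithin] with t hD hs ht
      have ht0 : (0:ℝ) < t := ht
      have hmsqc := hsub (xb + t • w + (t^2/2) • z) hs
      have hc : t^2/2 * (2/t^2) = 1 := by
        have htn : (t : ℝ) ≠ 0 := ht0.ne'
        field_simp
      have hkey3 : F (xb + t • w + (t^2/2) • z) - (F xb + t • dF w + (t^2/2) • Fpp w z)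
          = (t^2/2) • ((2/t^2) • (F (xb + t • w + (t^2/2) • z) - F xb - t • dF w)
            - Fpp w z) := by
        rw [smul_sub, smul_smul, hc, one_smul]
        abel
      have hFd : infDist (F (xb + t • w + (t^2/2) • z)) (edom θ)
          ≤ t^2/2 * ‖(2/t^2) • (F (xb + t • w + (t^2/2) • z) - F xb - t • dF w)
            - Fpp w z‖ := by
        calc infDist (F (xb + t • w + (t^2/2) • z)) (edom θ)
            ≤ dist (F (xb + t • w + (t^2/2) • z))
              (F xb + t • dF w + (t^2/2) • Fpp w z) := infDist_le_dist_of_mem hD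
          _ = t^2/2 * ‖(2/t^2) • (F (xb + t • w + (t^2/2) • z) - F xb - t • dF w)
              - Fpp w z‖ := by
              rw [dist_eq_norm, hkey3, norm_smul, Real.norm_eq_abs,
                abs_of_pos (div_pos (pow_pos ht0 2) two_pos)]
      rw [div_le_iff₀ (pow_pos ht0 2)]
      calc infDist (xb + t • w + (t^2/2) • z) Df
          ≤ κ * infDist (F (xb + t • w + (t^2/2) • z)) (edom θ) := hmsqc
        _ ≤ κ * (t^2/2 * ‖(2/t^2) • (F (xb + t • w + (t^2/2) • z) - F xb - t • dF w)
            - Fpp w z‖) := mul_le_mul_of_nonneg_left hFd hκ.le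
        _ = (κ/2) * ‖(2/t^2) • (F (xb + t • w + (t^2/2) • z) - F xb - t • dF w)
            - Fpp w z‖ * t^2 := by ring
    · have hg : Tendsto (fun t : ℝ =>
          (κ/2) * ‖(2/t^2) • (F (xb + t • w + (t^2/2) • z) - F xb - t • dF w)
            - Fpp w z‖) (𝓝[>] (0:ℝ)) (𝓝 ((κ/2) * ‖Fpp w z - Fpp w z‖)) :=
        ((hexpz.sub tendsto_const_nhds).norm).const_mul _
      rwa [sub_self, norm_zero, mul_zero] at hg
  ------------------------------------------------------------------
  -- Step 8 : itcone2 ⊆ tcone2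
  ------------------------------------------------------------------
  have hstep8 : itcone2 Df xb w ⊆ tcone2 Df xb w := by
    intro z hz
    have hseq : Tendsto (fun n : ℕ => 1/((n:ℝ)+1)) atTop (𝓝[>] (0:ℝ)) :=
      tendsto_nhdsWithin_of_tendsto_nhds_of_eventually_within _
        tendsto_one_div_add_atTop_nhds_zero_nat
        (Eventually.of_forall fun n => mem_Ioi.2 (by positivity))
    have hz' : Tendsto (fun τ : ℝ => infDist (xb + τ • w + (τ ^ 2 / 2) • z) Df / τ ^ 2)
        (𝓝[>] (0 : ℝ)) (𝓝 0) := hz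
    exact ⟨fun n => 1/((n:ℝ)+1), fun n => by positivity,
      tendsto_one_div_add_atTop_nhds_zero_nat, (hz'.comp hseq).congr fun n => rfl⟩
  ------------------------------------------------------------------
  -- Assembly
  ------------------------------------------------------------------
  have heq1 : tcone2 Df xb w = {z : X | Fpp w z ∈ tcone2 (edom θ) (F xb) (dF w)} :=
    Subset.antisymm hstep6 (fun z hz => hstep8 (hstep7 hz))
  have heq2 : tcone2 Df xb w = itcone2 Df xb w :=
    Subset.antisymm (fun z hz => hstep7 (hstep6 hz)) hstep8
  exact ⟨⟨heq2.symm, hne5⟩, hne5, heq1, heq2⟩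


end Paper
end
end

section
/- Let ψ : ℝ^m → ℝ∪{+∞} be PWTD with pieces Ω_1,…,Ω_s and twice differentiable selections ψ_1,…,ψ_s. Then: (i) dom ψ is closed, ψ is continuous relative to dom ψ, and ψ is lower semicontinuous on ℝ^m; (ii) for each y ∈ dom ψ, dom dψ(y) = T_{dom ψ}(y) = ⋃_{j∈J_y} T_{Ω_j}(y); (iii) for any y ∈ dom ψ and w ∈ ℝ^m, dψ(y)(w) = lim_{τ↓0} [ψ(y+τw) − ψ(y)]/τ, which equals ⟨∇ψ_k(y), w⟩ for any k ∈ J_{y,w} when J_{y,w} ≠ ∅ and equals +∞ when J_{y,w} = ∅; consequently dψ(y) is a proper piecewise linear function. -/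
open Filter Topology Metric Set Pointwise
open scoped RealInnerProductSpace Classical

noncomputable section

namespace Paper

variable {X : Type*} [NormedAddCommGroup X] [NormedSpace ℝ X]


theorem IsPolyhedral.isClosed {C : Set X} (h : IsPolyhedral C) : IsClosed C := by
  obtain ⟨k, a, b, rfl⟩ := h
  have : {y : X | ∀ i, a i y ≤ b i} = ⋂ i, {y | a i y ≤ b i} := by
    ext x; simp [Set.mem_iInter]
  rw [this]
  exact isClosed_iInter fun i => isClosed_le (a i).continuous continuous_const

theorem isPolyhedral_empty : IsPolyhedral (∅ : Set X) := by
  refine ⟨1, fun _ => 0, fun _ => -1, ?_⟩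
  ext x
  simp

theorem eventually_delta {P : ℝ → Prop} (h : ∀ᶠ τ in 𝓝[>] (0:ℝ), P τ) :
    ∃ δ > 0, ∀ τ : ℝ, 0 < τ → τ ≤ δ → P τ := by
  obtain ⟨ε, hε, hsub⟩ := Metric.mem_nhdsWithin_iff.mp h
  refine ⟨ε/2, by positivity, fun τ h1 h2 => hsub ⟨?_, h1⟩⟩
  rw [Metric.mem_ball, Real.dist_eq, sub_zero, abs_of_nonneg h1.le]
  linarith

theorem ray_mem_tcone {C : Set X} {y w : X} (h : ∀ᶠ τ in 𝓝[>] (0:ℝ), y + τ • w ∈ C) :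
    w ∈ tcone C y := by
  obtain ⟨δ, hδ, hall⟩ := eventually_delta h
  refine ⟨fun k => δ / (k+1), fun k => by positivity, ?_, ?_⟩
  · have h1 : Tendsto (fun k : ℕ => (k : ℝ) + 1) atTop atTop :=
      tendsto_atTop_add_const_right _ 1 tendsto_natCast_atTop_atTop
    exact tendsto_const_nhds.div_atTop h1
  · have hz : ∀ k : ℕ, infDist (y + (δ/((k:ℝ)+1)) • w) C / (δ/((k:ℝ)+1)) = 0 := by
      intro k
      have hmem : y + (δ/((k:ℝ)+1)) • w ∈ C := by
        refine hall _ (by positivity) ?_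
        have h1 : (1:ℝ) ≤ (k:ℝ) + 1 := le_add_of_nonneg_left (Nat.cast_nonneg k)
        calc δ/((k:ℝ)+1) ≤ δ/1 := by gcongr
        _ = δ := div_one δ
      rw [infDist_zero_of_mem hmem, zero_div]
    exact tendsto_const_nhds.congr fun k => (hz k).symm

theorem tcone_mono {S T : Set X} (hST : S ⊆ T) (hS : S.Nonempty) {x : X} :
    tcone S x ⊆ tcone T x := by
  rintro w ⟨τ, hpos, hτ0, hlim⟩
  refine ⟨τ, hpos, hτ0, ?_⟩
  refine squeeze_zero (fun k => div_nonneg infDist_nonneg (hpos k).le) (fun k => ?_) hlim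
  exact div_le_div_of_nonneg_right (infDist_le_infDist_of_subset hST hS) (hpos k).le


theorem poly_main {C : Set X} (hC : IsPolyhedral C) {y : X} (hy : y ∈ C) :
    ∃ K : Set X, IsPolyhedral K ∧ tcone C y = K ∧
      (∀ w ∈ K, ∀ᶠ τ in 𝓝[>] (0:ℝ), y + τ • w ∈ C) ∧
      (∀ w ∉ K, ∃ r > 0, ∀ w' ∈ Metric.ball w r, ∀ τ : ℝ, 0 < τ → y + τ • w' ∉ C) := by
  obtain ⟨k, a, b, hCeq⟩ := hC
  have hmemC : ∀ x, x ∈ C ↔ ∀ i, a i x ≤ b i := fun x => by rw [hCeq]; exact Iff.rfl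
  set K : Set X := {v | ∀ i, a i y = b i → a i v ≤ 0} with hK
  have haff : ∀ (i) (τ : ℝ) (v : X), a i (y + τ • v) = a i y + τ * a i v := by
    intro i τ v
    rw [map_add, map_smul, smul_eq_mul]
  have hray : ∀ w ∈ K, ∀ᶠ τ in 𝓝[>] (0:ℝ), y + τ • w ∈ C := by
    intro w hw
    have : ∀ᶠ τ in 𝓝[>] (0:ℝ), ∀ i, a i (y + τ • w) ≤ b i := by
      rw [eventually_all]
      intro i
      by_cases hact : a i y = b i
      · filter_upwards [self_mem_nhdsWithin] with τ hτ
        have hτ' : (0:ℝ) < τ := hτ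
        have h1 : a i w ≤ 0 := hw i hact
        rw [haff, hact]
        nlinarith
      · have hlt : a i y < b i := lt_of_le_of_ne ((hmemC y).mp hy i) hact
        have hcont : Tendsto (fun τ : ℝ => a i (y + τ • w)) (𝓝[>] 0) (𝓝 (a i y)) := by
          have hc : Continuous fun τ : ℝ => a i (y + τ • w) := by
            exact (a i).continuous.comp (continuous_const.add (continuous_id.smul continuous_const))
          have := hc.tendsto 0
          simp only [zero_smul, add_zero] at this
          exact this.mono_left nhdsWithin_le_nhds
        exact (hcont.eventually_lt_const hlt).mono fun τ h => h.le
    filter_upwards [this] with τ h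
    exact (hmemC _).mpr h
  have hsub : tcone C y ⊆ K := by
    rintro w ⟨τ, hpos, hτ0, hlim⟩ i hact
    have hCne : C.Nonempty := ⟨y, hy⟩
    have key : ∀ n, a i w ≤ ‖a i‖ * (infDist (y + τ n • w) C / τ n + τ n) := by
      intro n
      have hτn := hpos n
      obtain ⟨z, hzC, hdz⟩ := (infDist_lt_iff hCne).mp
        (lt_add_of_pos_right (infDist (y + τ n • w) C) (by positivity : (0:ℝ) < τ n ^ 2))
      have hza : a i z ≤ b i := (hmemC z).mp hzC i
      have h2 : τ n * a i w ≤ ‖a i‖ * (infDist (y + τ n • w) C + τ n ^ 2) := by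
        have e1 : τ n * a i w = a i (y + τ n • w) - b i := by rw [haff, hact]; ring
        calc τ n * a i w = a i (y + τ n • w) - b i := e1
        _ ≤ a i (y + τ n • w) - a i z := by linarith
        _ = a i ((y + τ n • w) - z) := by rw [map_sub]
        _ ≤ ‖a i ((y + τ n • w) - z)‖ := le_abs_self _
        _ ≤ ‖a i‖ * ‖(y + τ n • w) - z‖ := (a i).le_opNorm _
        _ = ‖a i‖ * dist (y + τ n • w) z := by rw [dist_eq_norm]
        _ ≤ ‖a i‖ * (infDist (y + τ n • w) C + τ n ^ 2) :=
            mul_le_mul_of_nonneg_left hdz.le (norm_nonneg _)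
      calc a i w = (τ n * a i w) / τ n := by field_simp
      _ ≤ (‖a i‖ * (infDist (y + τ n • w) C + τ n ^ 2)) / τ n :=
          div_le_div_of_nonneg_right h2 hτn.le
      _ = ‖a i‖ * (infDist (y + τ n • w) C / τ n + τ n) := by
          rw [mul_div_assoc]
          congr 1
          field_simp
    have hlim2 : Tendsto (fun n => ‖a i‖ * (infDist (y + τ n • w) C / τ n + τ n)) atTop
        (𝓝 (‖a i‖ * (0 + 0))) := tendsto_const_nhds.mul (hlim.add hτ0)
    have h0 : a i w ≤ ‖a i‖ * (0 + 0) := ge_of_tendsto' hlim2 key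
    simpa using h0
  have hKeq : tcone C y = K := by
    refine Subset.antisymm hsub fun w hw => ray_mem_tcone (hray w hw)
  have hKpoly : IsPolyhedral K := by
    refine ⟨k, fun i => if a i y = b i then a i else 0, fun _ => 0, ?_⟩
    ext v
    simp only [hK, mem_setOf_eq]
    constructor
    · intro h i
      by_cases hi : a i y = b i
      · rw [if_pos hi]; exact h i hi
      · rw [if_neg hi]; simp
    · intro h i hi
      have := h i
      rwa [if_pos hi] at this
  refine ⟨K, hKpoly, hKeq, hray, ?_⟩
  intro w hw
  simp only [hK, mem_setOf_eq, not_forall] at hw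
  obtain ⟨i, hact, hpos⟩ := hw
  push_neg at hpos
  refine ⟨a i w / (2 * (‖a i‖ + 1)), by positivity, ?_⟩
  intro w' hw' τ hτ hmem
  have h1 := (hmemC _).mp hmem i
  have hb : |a i (w' - w)| ≤ ‖a i‖ * ‖w' - w‖ := (a i).le_opNorm _
  have hd : ‖w' - w‖ < a i w / (2 * (‖a i‖ + 1)) := by
    rwa [Metric.mem_ball, dist_eq_norm] at hw'
  have hn : (0:ℝ) ≤ ‖a i‖ := norm_nonneg _
  have hnn : (0:ℝ) ≤ ‖w' - w‖ := norm_nonneg _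
  have habs : |a i (w' - w)| < a i w / 2 := by
    calc |a i (w' - w)| ≤ ‖a i‖ * ‖w' - w‖ := hb
    _ ≤ (‖a i‖ + 1) * ‖w' - w‖ := by nlinarith
    _ < (‖a i‖ + 1) * (a i w / (2 * (‖a i‖ + 1))) := by
        apply mul_lt_mul_of_pos_left hd (by positivity)
    _ = a i w / 2 := by field_simp
  have habs' := (abs_lt.mp habs).1
  have hsplit : a i w' = a i w + a i (w' - w) := by rw [map_sub]; ring
  have h2 : 0 < a i w' := by rw [hsplit]; linarith
  rw [haff] at h1
  nlinarith

theorem tendsto_base (y w : X) :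
    Tendsto (fun p : ℝ × X => y + p.1 • p.2) ((𝓝[>] (0:ℝ)) ×ˢ 𝓝 w) (𝓝 y) := by
  have hτ0 : Tendsto (fun p : ℝ × X => p.1) ((𝓝[>] (0:ℝ)) ×ˢ 𝓝 w) (𝓝 0) :=
    tendsto_fst.mono_right nhdsWithin_le_nhds
  have h : Tendsto (fun p : ℝ × X => p.1 • p.2) ((𝓝[>] (0:ℝ)) ×ˢ 𝓝 w) (𝓝 ((0:ℝ) • w)) :=
    hτ0.smul tendsto_snd
  simpa using tendsto_const_nhds.add h

theorem semideriv_prod {g : X → ℝ} {f : X →L[ℝ] ℝ} {y : X} (hf : HasFDerivAt g f y) (w : X) :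
    Tendsto (fun p : ℝ × X => (g (y + p.1 • p.2) - g y) / p.1) ((𝓝[>] (0:ℝ)) ×ˢ 𝓝 w)
      (𝓝 (f w)) := by
  set l := (𝓝[>] (0:ℝ)) ×ˢ 𝓝 w with hl
  have hτ : Tendsto (fun p : ℝ × X => p.1) l (𝓝[>] 0) := tendsto_fst
  have hw' : Tendsto (fun p : ℝ × X => p.2) l (𝓝 w) := tendsto_snd
  have hG : Tendsto (fun p : ℝ × X => y + p.1 • p.2) l (𝓝 y) := tendsto_base y w
  have hE : (fun p : ℝ × X => g (y + p.1 • p.2) - g y - f ((y + p.1 • p.2) - y))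
      =o[l] fun p : ℝ × X => (y + p.1 • p.2) - y := (hf.isLittleO).comp_tendsto hG
  simp only [add_sub_cancel_left] at hE
  have hO : (fun p : ℝ × X => p.1 • p.2) =O[l] fun p : ℝ × X => p.1 := by
    rw [Asymptotics.isBigO_iff]
    refine ⟨‖w‖ + 1, ?_⟩
    have hev : ∀ᶠ p : ℝ × X in l, ‖p.2‖ < ‖w‖ + 1 :=
      (hw'.norm).eventually_lt_const (by linarith)
    filter_upwards [hev] with p hp
    rw [norm_smul]
    have h1 : (0:ℝ) ≤ ‖p.1‖ := norm_nonneg _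
    have h2 : (0:ℝ) ≤ ‖p.2‖ := norm_nonneg _
    nlinarith
  have hE2 := hE.trans_isBigO hO
  have hdiv : Tendsto (fun p : ℝ × X => (g (y + p.1 • p.2) - g y - f (p.1 • p.2)) / p.1) l
      (𝓝 0) := hE2.tendsto_div_nhds_zero
  have hfw : Tendsto (fun p : ℝ × X => f p.2) l (𝓝 (f w)) :=
    (f.continuous.tendsto w).comp hw'
  have hsum := hdiv.add hfw
  rw [zero_add] at hsum
  refine hsum.congr' ?_
  filter_upwards [hτ.eventually_mem self_mem_nhdsWithin] with p hp
  have hτp : (0:ℝ) < p.1 := hp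
  have hfs : f (p.1 • p.2) = p.1 * f p.2 := by rw [map_smul, smul_eq_mul]
  field_simp [hfs]
  rw [hfs]
  ring

theorem key_tendsto {ψ : X → EReal} {s : ℕ} {Ω : Fin s → Set X} {sel : Fin s → X → ℝ}
    (hψ : IsPWTD ψ Ω sel) {y w : X} {i : Fin s} (hi : i ∈ Jset2 Ω y w) :
    Tendsto (fun τ : ℝ => (ψ (y + τ • w) - ψ y) * ((τ⁻¹ : ℝ) : EReal)) (𝓝[>] (0:ℝ))
      (𝓝 ((fderiv ℝ (sel i) y w : ℝ) : EReal)) := by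
  obtain ⟨hyi, hwt⟩ := hi
  obtain ⟨K, _, hKeq, hray, _⟩ := poly_main (hψ.polyhedral i) hyi
  have hraymem : ∀ᶠ τ in 𝓝[>] (0:ℝ), y + τ • w ∈ Ω i := hray w (hKeq ▸ hwt)
  obtain ⟨U, hUopen, hUsub, hUdiff⟩ := hψ.smooth i
  have hdiff : DifferentiableAt ℝ (sel i) y := hUdiff.1 y (hUsub hyi)
  have hder := semideriv_prod hdiff.hasFDerivAt w
  have hpath : Tendsto (fun τ : ℝ => ((τ, w) : ℝ × X)) (𝓝[>] (0:ℝ)) ((𝓝[>] (0:ℝ)) ×ˢ 𝓝 w) :=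
    tendsto_id.prodMk tendsto_const_nhds
  have hreal : Tendsto (fun τ : ℝ => (sel i (y + τ • w) - sel i y) / τ) (𝓝[>] (0:ℝ))
      (𝓝 (fderiv ℝ (sel i) y w)) := (hder.comp hpath).congr fun τ => rfl
  have hcoe := EReal.tendsto_coe.mpr hreal
  refine hcoe.congr' ?_
  filter_upwards [hraymem, self_mem_nhdsWithin] with τ hmem hτ
  have hτ' : (0:ℝ) < τ := hτ
  rw [hψ.agrees i _ hmem, hψ.agrees i y hyi, div_eq_mul_inv]
  norm_cast

theorem eventually_active {s : ℕ} (Ω : Fin s → Set X) (hpoly : ∀ i, IsPolyhedral (Ω i)) (y : X) :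
    ∀ᶠ x in 𝓝 y, ∀ i, x ∈ Ω i → y ∈ Ω i := by
  rw [eventually_all]
  intro i
  by_cases hyi : y ∈ Ω i
  · filter_upwards with x _; exact hyi
  · filter_upwards [(hpoly i).isClosed.isOpen_compl.eventually_mem hyi] with x hx h
    exact absurd h hx

theorem region {ψ : X → EReal} {s : ℕ} {Ω : Fin s → Set X} {sel : Fin s → X → ℝ}
    (hψ : IsPWTD ψ Ω sel) (y w : X) :
    ∀ᶠ p : ℝ × X in (𝓝[>] (0:ℝ)) ×ˢ 𝓝 w, y + p.1 • p.2 ∈ edom ψ →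
      ∃ i ∈ Jset2 Ω y w, y + p.1 • p.2 ∈ Ω i := by
  set l := (𝓝[>] (0:ℝ)) ×ˢ 𝓝 w with hl
  have hG : Tendsto (fun p : ℝ × X => y + p.1 • p.2) l (𝓝 y) := tendsto_base y w
  have hmain : ∀ᶠ p : ℝ × X in l, ∀ i, i ∉ Jset2 Ω y w → y + p.1 • p.2 ∉ Ω i := by
    rw [eventually_all]
    intro i
    by_cases hmem : i ∈ Jset2 Ω y w
    · filter_upwards with p h
      exact absurd hmem h
    · by_cases hyi : y ∈ Ω i
      · have hwt : w ∉ tcone (Ω i) y := fun h => hmem ⟨hyi, h⟩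
        obtain ⟨K, _, hKeq, _, hmiss⟩ := poly_main (hψ.polyhedral i) hyi
        obtain ⟨r, hr, hmiss'⟩ := hmiss w (hKeq ▸ hwt)
        have hev1 : ∀ᶠ p : ℝ × X in l, p.1 ∈ Ioi (0:ℝ) :=
          tendsto_fst.eventually_mem self_mem_nhdsWithin
        have hev2 : ∀ᶠ p : ℝ × X in l, p.2 ∈ Metric.ball w r :=
          tendsto_snd.eventually_mem (Metric.ball_mem_nhds w hr)
        filter_upwards [hev1, hev2] with p h1 h2 _
        exact hmiss' p.2 h2 p.1 h1
      · have hcl : IsClosed (Ω i) := (hψ.polyhedral i).isClosed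
        have hev : ∀ᶠ p : ℝ × X in l, y + p.1 • p.2 ∈ (Ω i)ᶜ :=
          hG.eventually (hcl.isOpen_compl.eventually_mem hyi)
        filter_upwards [hev] with p hp _
        exact hp
  filter_upwards [hmain] with p hp hdom
  rw [hψ.dom_eq] at hdom
  obtain ⟨i, hi⟩ := mem_iUnion.mp hdom
  by_cases hiJ : i ∈ Jset2 Ω y w
  · exact ⟨i, hiJ, hi⟩
  · exact absurd hi (hp i hiJ)

set_option maxHeartbeats 1000000 in
/-- Lemma 3.1 (subderivatives of PWTD functions). -/
theorem statement4
    {m s : ℕ} (ψ : EuclideanSpace ℝ (Fin m) → EReal)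
    (Ω : Fin s → Set (EuclideanSpace ℝ (Fin m)))
    (sel : Fin s → EuclideanSpace ℝ (Fin m) → ℝ)
    (hψ : IsPWTD ψ Ω sel) :
    (IsClosed (edom ψ) ∧ ContinuousOn ψ (edom ψ) ∧ LowerSemicontinuous ψ) ∧
    (∀ y ∈ edom ψ,
      edom (subderiv ψ y) = tcone (edom ψ) y ∧
      tcone (edom ψ) y = ⋃ j ∈ Jset Ω y, tcone (Ω j) y) ∧
    (∀ y ∈ edom ψ, ∀ w : EuclideanSpace ℝ (Fin m),
      Tendsto (fun τ : ℝ => (ψ (y + τ • w) - ψ y) * ((τ⁻¹ : ℝ) : EReal))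
        (𝓝[>] (0 : ℝ)) (𝓝 (subderiv ψ y w)) ∧
      (∀ k ∈ Jset2 Ω y w, subderiv ψ y w = ((fderiv ℝ (sel k) y w : ℝ) : EReal)) ∧
      (Jset2 Ω y w = ∅ → subderiv ψ y w = ⊤)) ∧
    (∀ y ∈ edom ψ, Proper (subderiv ψ y) ∧ IsPWL (subderiv ψ y)) := by
  classical
  have hclosed : IsClosed (edom ψ) := by
    rw [hψ.dom_eq]
    exact isClosed_iUnion_of_finite fun i => (hψ.polyhedral i).isClosed
  have hψreal : ∀ y ∈ edom ψ, ∃ i, y ∈ Ω i := by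
    intro y hy
    rw [hψ.dom_eq] at hy
    exact mem_iUnion.mp hy
  have hcont_at : ∀ i, ∀ x ∈ Ω i, ContinuousAt (sel i) x := by
    intro i x hx
    obtain ⟨U, hUo, hUs, hUd⟩ := hψ.smooth i
    exact (hUd.1 x (hUs hx)).continuousAt
  have hdiff_at : ∀ i, ∀ x ∈ Ω i, DifferentiableAt ℝ (sel i) x := by
    intro i x hx
    obtain ⟨U, hUo, hUs, hUd⟩ := hψ.smooth i
    exact hUd.1 x (hUs hx)
  -- Part (iii)
  have hiii : ∀ y ∈ edom ψ, ∀ w : EuclideanSpace ℝ (Fin m),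
      Tendsto (fun τ : ℝ => (ψ (y + τ • w) - ψ y) * ((τ⁻¹ : ℝ) : EReal)) (𝓝[>] (0:ℝ))
        (𝓝 (subderiv ψ y w)) ∧
      (∀ k ∈ Jset2 Ω y w, subderiv ψ y w = ((fderiv ℝ (sel k) y w : ℝ) : EReal)) ∧
      (Jset2 Ω y w = ∅ → subderiv ψ y w = ⊤) := by
    intro y hy w
    obtain ⟨i₀, hi₀⟩ := hψreal y hy
    have hψy : ψ y = ((sel i₀ y : ℝ) : EReal) := hψ.agrees i₀ y hi₀
    have hpath : Tendsto (fun τ : ℝ => ((τ, w) : ℝ × EuclideanSpace ℝ (Fin m)))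
        (𝓝[>] (0:ℝ)) ((𝓝[>] (0:ℝ)) ×ˢ 𝓝 w) := tendsto_id.prodMk tendsto_const_nhds
    by_cases hJ : Jset2 Ω y w = ∅
    · have hev : ∀ᶠ p : ℝ × (EuclideanSpace ℝ (Fin m)) in (𝓝[>] (0:ℝ)) ×ˢ 𝓝 w,
          (ψ (y + p.1 • p.2) - ψ y) * ((p.1⁻¹ : ℝ) : EReal) = ⊤ := by
        filter_upwards [region hψ y w,
          tendsto_fst.eventually_mem self_mem_nhdsWithin] with p hp hτ
        have hτ' : (0:ℝ) < p.1 := hτ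
        have hnd : ψ (y + p.1 • p.2) = ⊤ := by
          by_contra hne
          obtain ⟨i, hiJ, _⟩ := hp hne
          rw [hJ] at hiJ
          exact absurd hiJ (Set.notMem_empty i)
        rw [hnd, hψy, EReal.top_sub_coe, EReal.top_mul_coe_of_pos (inv_pos.mpr hτ')]
      have hsub : subderiv ψ y w = ⊤ := by
        rw [subderiv, liminf_congr hev]
        exact liminf_const ⊤
      refine ⟨?_, ?_, fun _ => hsub⟩
      · rw [hsub]
        have hev' := hpath.eventually hev
        exact tendsto_const_nhds.congr' (hev'.mono fun τ h => h.symm)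
      · intro k hk
        rw [hJ] at hk
        exact absurd hk (Set.notMem_empty k)
    · obtain ⟨k, hk⟩ := Set.nonempty_iff_ne_empty.mpr hJ
      have hBk := key_tendsto hψ hk
      have hgrads : ∀ j ∈ Jset2 Ω y w, fderiv ℝ (sel j) y w = fderiv ℝ (sel k) y w := by
        intro j hj
        have hBj := key_tendsto hψ hj
        have := tendsto_nhds_unique hBj hBk
        exact_mod_cast this
      have hupper : subderiv ψ y w ≤ ((fderiv ℝ (sel k) y w : ℝ) : EReal) := by
        haveI : (map (fun τ : ℝ => ((τ, w) : ℝ × EuclideanSpace ℝ (Fin m)))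
            (𝓝[>] (0:ℝ))).NeBot := Filter.map_neBot
        have h1 : Tendsto (fun p : ℝ × EuclideanSpace ℝ (Fin m) =>
            (ψ (y + p.1 • p.2) - ψ y) * ((p.1⁻¹ : ℝ) : EReal))
            (map (fun τ : ℝ => ((τ, w) : ℝ × EuclideanSpace ℝ (Fin m))) (𝓝[>] (0:ℝ)))
            (𝓝 ((fderiv ℝ (sel k) y w : ℝ) : EReal)) := by
          rw [tendsto_map'_iff]
          exact hBk
        have h2 := h1.liminf_eq
        have h3 : subderiv ψ y w ≤ liminf (fun p : ℝ × EuclideanSpace ℝ (Fin m) =>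
            (ψ (y + p.1 • p.2) - ψ y) * ((p.1⁻¹ : ℝ) : EReal))
            (map (fun τ : ℝ => ((τ, w) : ℝ × EuclideanSpace ℝ (Fin m))) (𝓝[>] (0:ℝ))) :=
          liminf_le_liminf_of_le hpath
        rw [h2] at h3
        exact h3
      have hlower : ((fderiv ℝ (sel k) y w : ℝ) : EReal) ≤ subderiv ψ y w := by
        rw [subderiv]
        refine (le_liminf_iff (by isBoundedDefault) (by isBoundedDefault)).mpr fun b hb => ?_
        obtain ⟨b', hbb', hb'd⟩ := EReal.exists_between_coe_real hb
        have hb'd' : b' < fderiv ℝ (sel k) y w := by exact_mod_cast hb'd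
        have hquot : ∀ᶠ p : ℝ × EuclideanSpace ℝ (Fin m) in (𝓝[>] (0:ℝ)) ×ˢ 𝓝 w,
            ∀ j, j ∈ Jset2 Ω y w → b' < (sel j (y + p.1 • p.2) - sel j y) / p.1 := by
          rw [eventually_all]
          intro j
          by_cases hj : j ∈ Jset2 Ω y w
          · have hder := semideriv_prod (hdiff_at j y hj.1).hasFDerivAt w
            have hbj : b' < fderiv ℝ (sel j) y w := by rw [hgrads j hj]; exact hb'd'
            filter_upwards [hder.eventually_const_lt hbj] with p hp _
            exact hp
          · filter_upwards with p hcon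
            exact absurd hcon hj
        filter_upwards [region hψ y w, hquot,
          tendsto_fst.eventually_mem self_mem_nhdsWithin] with p hreg hq hτ
        have hτ' : (0:ℝ) < p.1 := hτ
        by_cases hdom : ψ (y + p.1 • p.2) = ⊤
        · rw [hdom, hψy, EReal.top_sub_coe, EReal.top_mul_coe_of_pos (inv_pos.mpr hτ')]
          exact lt_of_lt_of_le hbb' le_top
        · obtain ⟨j, hjJ, hjΩ⟩ := hreg hdom
          rw [hψ.agrees j _ hjΩ, hψ.agrees j y hjJ.1]
          have heq : (((sel j (y + p.1 • p.2) : ℝ) : EReal) - ((sel j y : ℝ) : EReal)) *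
              ((p.1⁻¹ : ℝ) : EReal)
              = (((sel j (y + p.1 • p.2) - sel j y) / p.1 : ℝ) : EReal) := by
            rw [div_eq_mul_inv]
            norm_cast
          rw [heq]
          calc b < (b' : EReal) := hbb'
          _ < _ := by exact_mod_cast hq j hjJ
      have hsub : subderiv ψ y w = ((fderiv ℝ (sel k) y w : ℝ) : EReal) :=
        le_antisymm hupper hlower
      refine ⟨by rw [hsub]; exact hBk, fun j hj => ?_, fun h => absurd (h ▸ hk) (Set.notMem_empty k)⟩
      rw [hsub]
      exact_mod_cast (hgrads j hj).symm
    -- Part (ii)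
  have hUnion : ∀ y ∈ edom ψ, edom (subderiv ψ y) = ⋃ j ∈ Jset Ω y, tcone (Ω j) y := by
    intro y hy
    ext w
    simp only [edom, Set.mem_setOf_eq]
    constructor
    · intro hne
      by_contra hcon
      have hJ : Jset2 Ω y w = ∅ := by
        ext j
        simp only [Set.mem_empty_iff_false, iff_false]
        rintro ⟨h1, h2⟩
        exact hcon (Set.mem_biUnion h1 h2)
      exact hne ((hiii y hy w).2.2 hJ)
    · intro hw
      obtain ⟨j, hj, hwt⟩ := Set.mem_iUnion₂.mp hw
      rw [(hiii y hy w).2.1 j ⟨hj, hwt⟩]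
      exact EReal.coe_ne_top _
  have htcone : ∀ y ∈ edom ψ, tcone (edom ψ) y = ⋃ j ∈ Jset Ω y, tcone (Ω j) y := by
    intro y hy
    refine Subset.antisymm ?_ ?_
    · intro w hw
      by_contra hcon
      have hJ : Jset2 Ω y w = ∅ := by
        ext j
        simp only [Set.mem_empty_iff_false, iff_false]
        rintro ⟨h1, h2⟩
        exact hcon (Set.mem_biUnion h1 h2)
      have hreg : ∀ᶠ p : ℝ × EuclideanSpace ℝ (Fin m) in (𝓝[>] (0:ℝ)) ×ˢ 𝓝 w,
          y + p.1 • p.2 ∉ edom ψ := by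
        filter_upwards [region hψ y w] with p hp hmem
        obtain ⟨i, hi, _⟩ := hp hmem
        rw [hJ] at hi
        exact absurd hi (Set.notMem_empty i)
      obtain ⟨S, hS, V, hV, hSV⟩ := Filter.mem_prod_iff.mp hreg
      obtain ⟨ε, hε, hεsub⟩ := Metric.mem_nhdsWithin_iff.mp hS
      obtain ⟨r, hr, hrsub⟩ := Metric.mem_nhds_iff.mp hV
      obtain ⟨τ, hpos, hτ0, hlim⟩ := hw
      have hbound : ∀ᶠ n in atTop, r ≤ infDist (y + τ n • w) (edom ψ) / τ n := by
        filter_upwards [hτ0.eventually_lt_const hε] with n hn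
        rw [le_div_iff₀ (hpos n)]
        by_contra hlt
        push_neg at hlt
        obtain ⟨z, hz, hdz⟩ := (infDist_lt_iff ⟨y, hy⟩).mp hlt
        set w'' := (τ n)⁻¹ • (z - y) with hw''
        have hz' : y + τ n • w'' = z := by
          rw [hw'', smul_smul, mul_inv_cancel₀ (hpos n).ne', one_smul]
          abel
        have h1 : w'' ∈ Metric.ball w r := by
          rw [Metric.mem_ball, dist_eq_norm]
          have heq : (τ n)⁻¹ • (z - (y + τ n • w)) = w'' - w := by
            rw [hw'', sub_add_eq_sub_sub, smul_sub, smul_smul,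
              inv_mul_cancel₀ (hpos n).ne', one_smul]
          calc ‖w'' - w‖ = ‖(τ n)⁻¹ • (z - (y + τ n • w))‖ := by rw [heq]
          _ = (τ n)⁻¹ * ‖z - (y + τ n • w)‖ := by
              rw [norm_smul, norm_inv, Real.norm_eq_abs, abs_of_pos (hpos n)]
          _ = dist (y + τ n • w) z / τ n := by
              rw [dist_eq_norm, norm_sub_rev, div_eq_inv_mul]
          _ < (r * τ n) / τ n := div_lt_div_of_pos_right hdz (hpos n)
          _ = r := mul_div_cancel_right₀ r (hpos n).ne'
        have hτball : τ n ∈ Metric.ball (0:ℝ) ε ∩ Ioi 0 := by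
          constructor
          · rw [Metric.mem_ball, Real.dist_eq, sub_zero, abs_of_pos (hpos n)]
            exact hn
          · exact hpos n
        have hnotin : y + τ n • w'' ∉ edom ψ :=
          hSV (Set.mk_mem_prod (hεsub hτball) (hrsub h1))
        rw [hz'] at hnotin
        exact hnotin hz
      have := ge_of_tendsto hlim hbound
      linarith
    · refine iUnion₂_subset fun j hj => tcone_mono ?_ ⟨y, hj⟩
      rw [hψ.dom_eq]
      exact subset_iUnion Ω j
  -- Part (i) : continuity on the domain
  have hcontOn : ContinuousOn ψ (edom ψ) := by
    intro y hy
    have hCWA : ∀ i, ContinuousWithinAt ψ (Ω i) y := by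
      intro i
      by_cases hyi : y ∈ Ω i
      · have hbase : ContinuousWithinAt (fun x => ((sel i x : ℝ) : EReal)) (Ω i) y :=
          (continuous_coe_real_ereal.continuousAt.comp (hcont_at i y hyi)).continuousWithinAt
        exact hbase.congr (fun x hx => hψ.agrees i x hx) (hψ.agrees i y hyi)
      · refine continuousWithinAt_of_notMem_closure ?_
        rwa [(hψ.polyhedral i).isClosed.closure_eq]
    have hU : ContinuousWithinAt ψ (⋃ i, Ω i) y := by
      rw [ContinuousWithinAt, nhdsWithin_iUnion, tendsto_iSup]
      exact fun i => hCWA i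
    rw [ContinuousWithinAt, hψ.dom_eq]
    exact hU
  -- Part (i) : lower semicontinuity
  have hlsc : LowerSemicontinuous ψ := by
    intro x c hc
    by_cases hx : x ∈ edom ψ
    · have hev1 := eventually_active Ω hψ.polyhedral x
      have hev2 : ∀ᶠ x' in 𝓝 x, ∀ i, x ∈ Ω i → c < ((sel i x' : ℝ) : EReal) := by
        rw [eventually_all]
        intro i
        by_cases hxi : x ∈ Ω i
        · have hcoe : Tendsto (fun x' => ((sel i x' : ℝ) : EReal)) (𝓝 x)
              (𝓝 ((sel i x : ℝ) : EReal)) :=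
            continuous_coe_real_ereal.continuousAt.comp (hcont_at i x hxi)
          have hcx : c < ((sel i x : ℝ) : EReal) := by
            rw [← hψ.agrees i x hxi]
            exact hc
          filter_upwards [hcoe.eventually_const_lt hcx] with x' h _
          exact h
        · filter_upwards with x' h
          exact absurd h hxi
      filter_upwards [hev1, hev2] with x' h1 h2
      by_cases hx' : x' ∈ edom ψ
      · obtain ⟨i, hi⟩ := hψreal x' hx'
        rw [hψ.agrees i x' hi]
        exact h2 i (h1 i hi)
      · have hx'' : ψ x' = ⊤ := by
          by_contra hne
          exact hx' hne
        rw [hx'']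
        exact lt_of_lt_of_le hc le_top
    · have hev : ∀ᶠ x' in 𝓝 x, x' ∉ edom ψ :=
        hclosed.isOpen_compl.eventually_mem hx
      have hxt : ψ x = ⊤ := by
        by_contra hne
        exact hx hne
      filter_upwards [hev] with x' hx'
      have hx'' : ψ x' = ⊤ := by
        by_contra hne
        exact hx' hne
      rw [hx'']
      rw [hxt] at hc
      exact hc
  -- Part (iv)
  have hproper : ∀ y ∈ edom ψ, Proper (subderiv ψ y) := by
    intro y hy
    constructor
    · intro w
      by_cases hJ : Jset2 Ω y w = ∅
      · rw [(hiii y hy w).2.2 hJ]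
        simp
      · obtain ⟨k, hk⟩ := Set.nonempty_iff_ne_empty.mpr hJ
        rw [(hiii y hy w).2.1 k hk]
        exact EReal.coe_ne_bot _
    · obtain ⟨i, hi⟩ := hψreal y hy
      have h0 : (0 : EuclideanSpace ℝ (Fin m)) ∈ tcone (Ω i) y := by
        refine ray_mem_tcone ?_
        filter_upwards with τ
        simpa using hi
      refine ⟨0, ?_⟩
      rw [(hiii y hy 0).2.1 i ⟨hi, h0⟩]
      exact EReal.coe_ne_top _
  have hpwl : ∀ y ∈ edom ψ, IsPWL (subderiv ψ y) := by
    intro y hy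
    refine ⟨s, fun j => if y ∈ Ω j then tcone (Ω j) y else ∅, ?_, ?_, ?_⟩
    · rw [hUnion y hy]
      ext w
      simp only [Set.mem_iUnion, Set.mem_iUnion₂]
      constructor
      · rintro ⟨j, hj, hw⟩
        have hj' : y ∈ Ω j := hj
        refine ⟨j, ?_⟩
        show w ∈ if y ∈ Ω j then tcone (Ω j) y else ∅
        rw [if_pos hj']
        exact hw
      · rintro ⟨j, hw⟩
        have hw' : w ∈ if y ∈ Ω j then tcone (Ω j) y else ∅ := hw
        by_cases hj : y ∈ Ω j
        · rw [if_pos hj] at hw'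
          exact ⟨j, hj, hw'⟩
        · rw [if_neg hj] at hw'
          exact absurd hw' (Set.notMem_empty w)
    · intro j
      show IsPolyhedral (if y ∈ Ω j then tcone (Ω j) y else ∅)
      by_cases hj : y ∈ Ω j
      · rw [if_pos hj]
        obtain ⟨K, hKpoly, hKeq, _, _⟩ := poly_main (hψ.polyhedral j) hj
        rw [hKeq]
        exact hKpoly
      · rw [if_neg hj]
        exact isPolyhedral_empty
    · intro j
      by_cases hj : y ∈ Ω j
      · refine ⟨fderiv ℝ (sel j) y, 0, ?_⟩
        intro w hw
        have hw' : w ∈ if y ∈ Ω j then tcone (Ω j) y else ∅ := hw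
        rw [if_pos hj] at hw'
        rw [(hiii y hy w).2.1 j ⟨hj, hw'⟩]
        norm_num
      · refine ⟨0, 0, fun w hw => ?_⟩
        have hw' : w ∈ if y ∈ Ω j then tcone (Ω j) y else ∅ := hw
        rw [if_neg hj] at hw'
        exact absurd hw' (Set.notMem_empty w)
  exact ⟨⟨hclosed, hcontOn, hlsc⟩,
    fun y hy => ⟨(hUnion y hy).trans (htcone y hy).symm, htcone y hy⟩,
    hiii,
    fun y hy => ⟨hproper y hy, hpwl y hy⟩⟩

end Paper
end
end
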